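/- arXiv:2601.09454 — 10 statements merged into one kernel-verified Lean document; each statement's English description precedes it below -/
import Mathlib

section
/- For all integers n and i with 3 dividing i, 3 ≤ i, and i ≤ n − 1, the graph H_n^i is P_6^2-free and contains exactly i·(n − i) + i/3 triangles. -/
open SimpleGraph

/-- A graph is `P6SqFree` if it has no subgraph isomorphic to the square of the
path on six vertices (vertices `v_1, …, v_6`, edges `v_i v_j` whenever `j - i ≤ 2`). -/
def P6SqFree {V : Type*} (G : SimpleGraph V) : Prop :=
  ¬ ∃ f : Fin 6 → V, Function.Injective f ∧
      ∀ i j : Fin 6, (i : ℕ) < (j : ℕ) → (j : ℕ) ≤ (i : ℕ) + 2 → G.Adj (f i) (f j)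

/-- The number of triangles of a finite graph. -/
noncomputable def triCount {V : Type*} [Fintype V] [DecidableEq V] (G : SimpleGraph V) : ℕ :=
  have : DecidableRel G.Adj := Classical.decRel _
  (G.cliqueFinset 3).card

/-- The number of edges of a finite graph. -/
noncomputable def edgeCount {V : Type*} (G : SimpleGraph V) : ℕ :=
  G.edgeSet.ncard

/-- The function `g` from the paper. -/
def gfun (n : ℕ) : ℕ :=
  if n % 6 = 2 ∨ n % 6 = 3 then n / 6 - 1
  else if n % 6 = 5 then n / 6 + 1
  else n / 6

/-- The graph `H_n^i`: complete bipartite graph between `{0,…,i-1}` and the rest,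
together with `i/3` pairwise vertex-disjoint triangles inside the first part
(grouping the first part into consecutive triples). -/
def Hgraph (n i : ℕ) : SimpleGraph (Fin n) where
  Adj v w := v ≠ w ∧
    ((v.val < i ∧ ¬ w.val < i) ∨ (¬ v.val < i ∧ w.val < i) ∨
     (v.val < i ∧ w.val < i ∧ v.val / 3 = w.val / 3))
  symm := by
    constructor
    rintro v w ⟨hne, h⟩
    refine ⟨hne.symm, ?_⟩
    rcases h with h | h | h
    · exact Or.inr (Or.inl ⟨h.2, h.1⟩)
    · exact Or.inl ⟨h.2, h.1⟩
    · exact Or.inr (Or.inr ⟨h.2.1, h.1, h.2.2.symm⟩)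
  loopless := by constructor; intro v h; exact h.1 rfl

open Finset

lemma hgraph_adj {n i : ℕ} {v w : Fin n} :
    (Hgraph n i).Adj v w ↔ v ≠ w ∧
      ((v.val < i ∧ ¬ w.val < i) ∨ (¬ v.val < i ∧ w.val < i) ∨
       (v.val < i ∧ w.val < i ∧ v.val / 3 = w.val / 3)) := Iff.rfl

def Gq (n i q : ℕ) : Finset (Fin n) := Finset.univ.filter (fun v => v.val / 3 = q ∧ v.val < i)

lemma mem_Gq {n i q : ℕ} {v : Fin n} : v ∈ Gq n i q ↔ v.val / 3 = q ∧ v.val < i := by simp [Gq]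

lemma Gq_card {n i q : ℕ} (h3 : 3 ∣ i) (hn : i < n) (hq : q < i / 3) : (Gq n i q).card = 3 := by
  have h1 : 3*q < n := by omega
  have h2 : 3*q+1 < n := by omega
  have h2' : 3*q+2 < n := by omega
  apply Finset.card_eq_three.mpr
  refine ⟨⟨3*q, h1⟩, ⟨3*q+1, h2⟩, ⟨3*q+2, h2'⟩, by simp [Fin.ext_iff], by simp [Fin.ext_iff],
    by simp [Fin.ext_iff], ?_⟩
  ext v; simp [mem_Gq, Fin.ext_iff]; omega

lemma card_filter_lt (n i : ℕ) (hn : i ≤ n) :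
    (Finset.univ.filter (fun v : Fin n => v.val < i)).card = i := by
  rw [← Finset.card_range i]
  apply Finset.card_bij (fun v _ => v.val)
  · intro v hv; simpa using (Finset.mem_filter.mp hv).2
  · intro a _ b _ h; exact Fin.ext h
  · intro m hm
    have hm' : m < i := Finset.mem_range.mp hm
    exact ⟨⟨m, by omega⟩, by simp [hm'], rfl⟩

def phi (n i : ℕ) : (Fin n × Fin n) ⊕ ℕ → Finset (Fin n)
  | .inl p => insert p.2 ((Gq n i (p.1.val / 3)).erase p.1)
  | .inr q => Gq n i q

def srcS (n i : ℕ) : Finset ((Fin n × Fin n) ⊕ ℕ) :=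
  ((Finset.univ.filter (fun v : Fin n => v.val < i)) ×ˢ
    (Finset.univ.filter (fun v : Fin n => ¬ v.val < i))).disjSum (Finset.range (i/3))

lemma mem_srcS_inl {n i : ℕ} {a b : Fin n} :
    Sum.inl (a, b) ∈ srcS n i ↔ a.val < i ∧ ¬ b.val < i := by simp [srcS]

lemma mem_srcS_inr {n i q : ℕ} : (Sum.inr q : (Fin n × Fin n) ⊕ ℕ) ∈ srcS n i ↔ q < i/3 := by
  simp [srcS]


/-- For `3 ∣ i`, `3 ≤ i ≤ n - 1`, the graph `H_n^i` is `P_6^2`-free and contains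
exactly `i (n - i) + i / 3` triangles. -/
theorem stmt1 (n i : ℕ) (h3 : 3 ∣ i) (hi : 3 ≤ i) (hin : i ≤ n - 1) :
    P6SqFree (Hgraph n i) ∧ triCount (Hgraph n i) = i * (n - i) + i / 3 := by
  constructor
  ·
      rintro ⟨f, hinj, hadj⟩
      have hD : ∀ a b : Fin 6, a ≠ b → (f a).val ≠ (f b).val := by
        intro a b hab h
        exact hab (hinj (Fin.ext h))
      have hQ : ∀ a b : Fin 6, (a:ℕ) < (b:ℕ) → (b:ℕ) ≤ (a:ℕ) + 2 → (f a).val < i → (f b).val < i →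
          (f a).val / 3 = (f b).val / 3 := by
        intro a b h1 h2 ha hb
        have := (hgraph_adj.mp (hadj a b h1 h2)).2
        tauto
      have hB : ∀ a b : Fin 6, (a:ℕ) < (b:ℕ) → (b:ℕ) ≤ (a:ℕ) + 2 → ¬ (f a).val < i →
          (f b).val < i := by
        intro a b h1 h2 ha
        have := (hgraph_adj.mp (hadj a b h1 h2)).2
        tauto
      have hB' : ∀ a b : Fin 6, (a:ℕ) < (b:ℕ) → (b:ℕ) ≤ (a:ℕ) + 2 → ¬ (f b).val < i →
          (f a).val < i := by
        intro a b h1 h2 hb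
        have := (hgraph_adj.mp (hadj a b h1 h2)).2
        tauto
      by_cases h2 : (f 2).val < i <;> by_cases h3' : (f 3).val < i
      · have q23 := hQ 2 3 (by decide) (by decide) h2 h3'
        obtain ⟨a, ha, haA, haQ⟩ : ∃ a : Fin 6, (a = 0 ∨ a = 1) ∧ ((f a).val < i ∧
            (f a).val / 3 = (f 2).val / 3) := by
          by_cases h0 : (f 0).val < i
          · exact ⟨0, Or.inl rfl, h0, hQ 0 2 (by decide) (by decide) h0 h2⟩
          · have h1 := hB 0 1 (by decide) (by decide) h0
            exact ⟨1, Or.inr rfl, h1, hQ 1 2 (by decide) (by decide) h1 h2⟩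
        obtain ⟨b, hb, hbA, hbQ⟩ : ∃ b : Fin 6, (b = 4 ∨ b = 5) ∧ ((f b).val < i ∧
            (f b).val / 3 = (f 3).val / 3) := by
          by_cases h5 : (f 5).val < i
          · exact ⟨5, Or.inr rfl, h5, (hQ 3 5 (by decide) (by decide) h3' h5).symm⟩
          · have h4 := hB' 4 5 (by decide) (by decide) h5
            exact ⟨4, Or.inl rfl, h4, (hQ 3 4 (by decide) (by decide) h3' h4).symm⟩
        have d1 := hD a 2 (by rcases ha with rfl | rfl <;> decide)
        have d2 := hD a 3 (by rcases ha with rfl | rfl <;> decide)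
        have d3 := hD a b (by rcases ha with rfl | rfl <;> rcases hb with rfl | rfl <;> decide)
        have d4 := hD b 2 (by rcases hb with rfl | rfl <;> decide)
        have d5 := hD b 3 (by rcases hb with rfl | rfl <;> decide)
        have d6 := hD 2 3 (by decide)
        omega
      · -- f 3 in B, f 2 in A
        have v1 := hB' 1 3 (by decide) (by decide) h3'
        have v4 := hB 3 4 (by decide) (by decide) h3'
        have v5 := hB 3 5 (by decide) (by decide) h3'
        have q12 := hQ 1 2 (by decide) (by decide) v1 h2
        have q24 := hQ 2 4 (by decide) (by decide) h2 v4
        have q45 := hQ 4 5 (by decide) (by decide) v4 v5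
        have d1 := hD 1 2 (by decide); have d2 := hD 1 4 (by decide)
        have d3 := hD 1 5 (by decide); have d4 := hD 2 4 (by decide)
        have d5 := hD 2 5 (by decide); have d6 := hD 4 5 (by decide)
        omega
      · -- f 2 in B
        have v0 := hB' 0 2 (by decide) (by decide) h2
        have v1 := hB' 1 2 (by decide) (by decide) h2
        have v3 := hB 2 3 (by decide) (by decide) h2
        have v4 := hB 2 4 (by decide) (by decide) h2
        have q01 := hQ 0 1 (by decide) (by decide) v0 v1
        have q13 := hQ 1 3 (by decide) (by decide) v1 v3
        have q34 := hQ 3 4 (by decide) (by decide) v3 v4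
        have d1 := hD 0 1 (by decide); have d2 := hD 0 3 (by decide)
        have d3 := hD 0 4 (by decide); have d4 := hD 1 3 (by decide)
        have d5 := hD 1 4 (by decide); have d6 := hD 3 4 (by decide)
        omega
      · exact h3' (hB 2 3 (by decide) (by decide) h2)
  ·
      classical
      have hn : i < n := by omega
      simp only [triCount]
      have hsrc : (srcS n i).card = i * (n - i) + i / 3 := by
        have hb : (Finset.univ.filter (fun v : Fin n => ¬ v.val < i)).card = n - i := by
          rw [← Nat.card_Ico i n]
          apply Finset.card_bij (fun v _ => v.val)
          · intro v hv
            have := (Finset.mem_filter.mp hv).2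
            simp only [Finset.mem_Ico]
            omega
          · intro a _ b _ h; exact Fin.ext h
          · intro m hm
            rw [Finset.mem_Ico] at hm
            exact ⟨⟨m, hm.2⟩, by simp; omega, rfl⟩
        rw [srcS, Finset.card_disjSum, Finset.card_product, card_filter_lt n i (le_of_lt hn), hb,
          Finset.card_range]
      rw [← hsrc]
      symm
      apply Finset.card_bij (fun x _ => phi n i x)
      · -- maps into cliqueFinset
        rintro (⟨a, b⟩ | q) hx
        · rw [mem_srcS_inl] at hx
          obtain ⟨hai, hbi⟩ := hx
          rw [SimpleGraph.mem_cliqueFinset_iff]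
          constructor
          · intro v hv w hw hvw
            simp only [phi, Finset.coe_insert, Set.mem_insert_iff, Finset.mem_coe,
              Finset.mem_erase, mem_Gq] at hv hw
            rw [hgraph_adj]
            refine ⟨hvw, ?_⟩
            rcases hv with rfl | ⟨_, hv1, hv2⟩ <;> rcases hw with rfl | ⟨_, hw1, hw2⟩
            · exact absurd rfl hvw
            · exact Or.inr (Or.inl ⟨hbi, hw2⟩)
            · exact Or.inl ⟨hv2, hbi⟩
            · exact Or.inr (Or.inr ⟨hv2, hw2, by omega⟩)
          · show (insert b ((Gq n i (a.val / 3)).erase a)).card = 3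
            have haq : a.val / 3 < i / 3 := by omega
            have hmem : a ∈ Gq n i (a.val / 3) := mem_Gq.mpr ⟨rfl, hai⟩
            rw [Finset.card_insert_of_notMem, Finset.card_erase_of_mem hmem, Gq_card h3 hn haq]
            intro hb'
            exact hbi (mem_Gq.mp (Finset.mem_of_mem_erase hb')).2
        · rw [mem_srcS_inr] at hx
          rw [SimpleGraph.mem_cliqueFinset_iff]
          constructor
          · intro v hv w hw hvw
            simp only [phi, Finset.mem_coe, mem_Gq] at hv hw
            exact hgraph_adj.mpr ⟨hvw, Or.inr (Or.inr ⟨hv.2, hw.2, by omega⟩)⟩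
          · exact Gq_card h3 hn hx
      · -- injective
        rintro (⟨a, b⟩ | q) hx (⟨a', b'⟩ | q') hy heq
        · rw [mem_srcS_inl] at hx hy
          simp only [phi] at heq
          have hbb : b = b' := by
            have hb1 : b ∈ insert b' ((Gq n i (a'.val / 3)).erase a') := by
              rw [← heq]; exact Finset.mem_insert_self _ _
            rcases Finset.mem_insert.mp hb1 with h | h
            · exact h
            · exact absurd (mem_Gq.mp (Finset.mem_of_mem_erase h)).2 hx.2
          subst hbb
          -- get a common element of the two erased groups
          have hne : ((Gq n i (a.val / 3)).erase a).Nonempty := by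
            rw [← Finset.card_pos, Finset.card_erase_of_mem (mem_Gq.mpr ⟨rfl, hx.1⟩),
              Gq_card h3 hn (by omega)]
            omega
          obtain ⟨x, hxmem⟩ := hne
          have hx2 : x ∈ insert b ((Gq n i (a'.val / 3)).erase a') := by
            rw [← heq]; exact Finset.mem_insert_of_mem hxmem
          have hxA : x.val < i := (mem_Gq.mp (Finset.mem_of_mem_erase hxmem)).2
          have hx3 : x ∈ (Gq n i (a'.val / 3)).erase a' := by
            rcases Finset.mem_insert.mp hx2 with h | h
            · exact absurd hxA (h ▸ hy.2)
            · exact h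
          have hqq : a.val / 3 = a'.val / 3 := by
            have := (mem_Gq.mp (Finset.mem_of_mem_erase hxmem)).1
            have := (mem_Gq.mp (Finset.mem_of_mem_erase hx3)).1
            omega
          rw [← hqq] at heq
          have herase : (Gq n i (a.val / 3)).erase a = (Gq n i (a.val / 3)).erase a' := by
            have hbn1 : b ∉ (Gq n i (a.val / 3)).erase a := fun h =>
              hx.2 (mem_Gq.mp (Finset.mem_of_mem_erase h)).2
            have hbn2 : b ∉ (Gq n i (a.val / 3)).erase a' := fun h =>
              hx.2 (mem_Gq.mp (Finset.mem_of_mem_erase h)).2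
            rw [← Finset.erase_insert hbn1, ← Finset.erase_insert hbn2, heq]
          have haa : a = a' := by
            by_contra hne'
            have : a ∈ (Gq n i (a.val / 3)).erase a' := by
              rw [Finset.mem_erase]
              exact ⟨hne', mem_Gq.mpr ⟨rfl, hx.1⟩⟩
            rw [← herase] at this
            exact (Finset.mem_erase.mp this).1 rfl
          rw [haa]
        · -- inl = inr : impossible
          rw [mem_srcS_inl] at hx
          simp only [phi] at heq
          exfalso
          have : b ∈ Gq n i q' := by rw [← heq]; exact Finset.mem_insert_self _ _
          exact hx.2 (mem_Gq.mp this).2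
        · rw [mem_srcS_inl] at hy
          simp only [phi] at heq
          exfalso
          have : b' ∈ Gq n i q := by rw [heq]; exact Finset.mem_insert_self _ _
          exact hy.2 (mem_Gq.mp this).2
        · rw [mem_srcS_inr] at hx hy
          simp only [phi] at heq
          have hne : (Gq n i q).Nonempty := by
            rw [← Finset.card_pos, Gq_card h3 hn hx]; omega
          obtain ⟨x, hxm⟩ := hne
          have hx2 := mem_Gq.mp hxm
          have hx3 := mem_Gq.mp (heq ▸ hxm)
          simp only [Sum.inr.injEq]
          omega
      · -- surjective
        intro t ht
        rw [SimpleGraph.mem_cliqueFinset_iff] at ht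
        obtain ⟨hclique, hcard⟩ := ht
        obtain ⟨x, y, z, hxy, hxz, hyz, rfl⟩ := Finset.card_eq_three.mp hcard
        have hadj : ∀ v w : Fin n, v ∈ ({x, y, z} : Finset (Fin n)) →
            w ∈ ({x, y, z} : Finset (Fin n)) → v ≠ w →
            ((v.val < i ∧ ¬ w.val < i) ∨ (¬ v.val < i ∧ w.val < i) ∨
             (v.val < i ∧ w.val < i ∧ v.val / 3 = w.val / 3)) := by
          intro v w hv hw hvw
          exact (hgraph_adj.mp (hclique (by simpa using hv) (by simpa using hw) hvw)).2
        have mixed : ∀ u v w : Fin n, u ≠ v → u ≠ w → v ≠ w →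
            u.val < i → v.val < i → ¬ w.val < i → u.val / 3 = v.val / 3 →
            ∃ p ∈ srcS n i, phi n i p = {u, v, w} := by
          intro u v w huv huw hvw hu hv hw hq
          have huv' : u.val ≠ v.val := fun h => huv (Fin.ext h)
          obtain ⟨m, hm⟩ : ∃ m, m = 9 * (u.val / 3) + 3 - u.val - v.val := ⟨_, rfl⟩
          have hmi : m < i := by omega
          have hmn : m < n := by omega
          refine ⟨Sum.inl (⟨⟨m, hmn⟩, w⟩), mem_srcS_inl.mpr ⟨hmi, hw⟩, ?_⟩
          have hav : (⟨m, hmn⟩ : Fin n).val = m := rfl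
          simp only [phi]
          ext v'
          simp only [Finset.mem_insert, Finset.mem_erase, mem_Gq, Finset.mem_singleton,
            Fin.ext_iff]
          constructor
          · rintro (h | ⟨h1, h2, h3'⟩)
            · omega
            · omega
          · intro h
            omega
        by_cases hx' : x.val < i <;> by_cases hy' : y.val < i <;> by_cases hz' : z.val < i
        · -- all in A
          refine ⟨Sum.inr (x.val / 3), mem_srcS_inr.mpr (by omega), ?_⟩
          have q1 : x.val / 3 = y.val / 3 := by
            rcases hadj x y (by simp) (by simp) hxy with h | h | h <;> tauto
          have q2 : x.val / 3 = z.val / 3 := by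
            rcases hadj x z (by simp) (by simp) hxz with h | h | h <;> tauto
          simp only [phi]
          symm
          apply Finset.eq_of_subset_of_card_le
          · intro v hv
            rcases Finset.mem_insert.mp hv with rfl | hv
            · exact mem_Gq.mpr ⟨rfl, hx'⟩
            rcases Finset.mem_insert.mp hv with rfl | hv
            · exact mem_Gq.mpr ⟨q1.symm, hy'⟩
            rw [Finset.mem_singleton] at hv
            subst hv
            exact mem_Gq.mpr ⟨q2.symm, hz'⟩
          · rw [Gq_card h3 hn (by omega)]
            omega
        · -- z in B
          have hq : x.val / 3 = y.val / 3 := by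
            rcases hadj x y (by simp) (by simp) hxy with h | h | h <;> tauto
          obtain ⟨p, hp, hphi⟩ := mixed x y z hxy hxz hyz hx' hy' hz' hq
          exact ⟨p, hp, hphi⟩
        · -- y in B
          have hq : x.val / 3 = z.val / 3 := by
            rcases hadj x z (by simp) (by simp) hxz with h | h | h <;> tauto
          obtain ⟨p, hp, hphi⟩ := mixed x z y hxz hxy hyz.symm hx' hz' hy' hq
          refine ⟨p, hp, ?_⟩
          rw [hphi, Finset.pair_comm z y]
        · exfalso
          rcases hadj y z (by simp) (by simp) hyz with h | h | h <;> tauto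
        · -- x in B
          have hq : y.val / 3 = z.val / 3 := by
            rcases hadj y z (by simp) (by simp) hyz with h | h | h <;> tauto
          obtain ⟨p, hp, hphi⟩ := mixed y z x hyz hxy.symm hxz.symm hy' hz' hx' hq
          refine ⟨p, hp, ?_⟩
          rw [hphi, Finset.pair_comm z x, Finset.insert_comm y x]
        · exfalso
          rcases hadj x z (by simp) (by simp) hxz with h | h | h <;> tauto
        · exfalso
          rcases hadj x y (by simp) (by simp) hxy with h | h | h <;> tauto
        · exfalso
          rcases hadj x y (by simp) (by simp) hxy with h | h | h <;> tauto
end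

section
/- Let G be a P_6^2-free graph and let x, y, z, w be distinct vertices such that {x,y,z} and {x,y,w} are triangles of G and the edge yz is contained in at least 4 triangles of G. Then the pair {x,w} is contained in at most 2 triangles of G. -/
open SimpleGraph

/-- If `{x,y,z}` and `{x,y,w}` are triangles of a `P_6^2`-free graph and the edge `yz`
lies in at least `4` triangles, then the pair `{x,w}` lies in at most `2` triangles. -/
theorem stmt4 {V : Type*} [Fintype V] (G : SimpleGraph V) (hfree : P6SqFree G)
    (x y z w : V) (hdist : List.Pairwise (· ≠ ·) [x, y, z, w])
    (hxy : G.Adj x y) (hyz : G.Adj y z) (hxz : G.Adj x z)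
    (hxw : G.Adj x w) (hyw : G.Adj y w)
    (h4 : 4 ≤ {v : V | G.Adj y v ∧ G.Adj z v}.ncard) :
    {v : V | G.Adj x v ∧ G.Adj w v}.ncard ≤ 2 := by
  by_contra hcon
  push_neg at hcon
  simp only [List.pairwise_cons, List.mem_cons, List.mem_singleton, List.not_mem_nil] at hdist
  obtain ⟨h1, h2, h3, -⟩ := hdist
  have hxy' : x ≠ y := h1 y (by tauto)
  have hxz' : x ≠ z := h1 z (by tauto)
  have hxw' : x ≠ w := h1 w (by tauto)
  have hyz' : y ≠ z := h2 z (by tauto)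
  have hyw' : y ≠ w := h2 w (by tauto)
  have hzw' : z ≠ w := h3 w (by tauto)
  clear h1 h2 h3
  obtain ⟨b, hbS, hb2⟩ : ∃ b, b ∈ {v : V | G.Adj x v ∧ G.Adj w v} ∧ b ∉ ({y, z} : Set V) := by
    refine Set.exists_mem_notMem_of_ncard_lt_ncard ?_ (Set.toFinite _)
    calc ({y, z} : Set V).ncard ≤ 2 := by
          refine le_trans (Set.ncard_insert_le _ _) ?_
          simp [Set.ncard_singleton]
      _ < _ := hcon
  obtain ⟨hxb, hwb⟩ := hbS
  have hby : b ≠ y := fun h => hb2 (by simp [h])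
  have hbz : b ≠ z := fun h => hb2 (by simp [h])
  obtain ⟨a, haS, ha2⟩ : ∃ a, a ∈ {v : V | G.Adj y v ∧ G.Adj z v} ∧ a ∉ ({x, w, b} : Set V) := by
    refine Set.exists_mem_notMem_of_ncard_lt_ncard ?_ (Set.toFinite _)
    calc ({x, w, b} : Set V).ncard ≤ 3 := by
          refine le_trans (Set.ncard_insert_le _ _) ?_
          refine Nat.succ_le_succ (le_trans (Set.ncard_insert_le _ _) ?_)
          simp [Set.ncard_singleton]
      _ < 4 := by norm_num
      _ ≤ _ := h4
  obtain ⟨hya, hza⟩ := haS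
  have hax : a ≠ x := fun h => ha2 (by simp [h])
  have haw : a ≠ w := fun h => ha2 (by simp [h])
  have hab : a ≠ b := fun h => ha2 (by simp [h])
  have hay : a ≠ y := fun h => G.loopless.irrefl y (h ▸ hya)
  have haz : a ≠ z := fun h => G.loopless.irrefl z (h ▸ hza)
  have hbx : b ≠ x := fun h => G.loopless.irrefl x (h ▸ hxb)
  have hbw : b ≠ w := fun h => G.loopless.irrefl w (h ▸ hwb)
  clear hb2 ha2 hcon h4
  apply hfree
  refine ⟨![a, z, y, x, w, b], ?_, ?_⟩
  · intro i j h
    fin_cases i <;> fin_cases j <;>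
      first
        | rfl
        | exact absurd h hax | exact absurd h.symm hax
        | exact absurd h haw | exact absurd h.symm haw
        | exact absurd h hab | exact absurd h.symm hab
        | exact absurd h hay | exact absurd h.symm hay
        | exact absurd h haz | exact absurd h.symm haz
        | exact absurd h hbx | exact absurd h.symm hbx
        | exact absurd h hbw | exact absurd h.symm hbw
        | exact absurd h hby | exact absurd h.symm hby
        | exact absurd h hbz | exact absurd h.symm hbz
        | exact absurd h hxy' | exact absurd h.symm hxy'
        | exact absurd h hxz' | exact absurd h.symm hxz'
        | exact absurd h hxw' | exact absurd h.symm hxw'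
        | exact absurd h hyz' | exact absurd h.symm hyz'
        | exact absurd h hyw' | exact absurd h.symm hyw'
        | exact absurd h hzw' | exact absurd h.symm hzw'
  · intro i j hij hle
    fin_cases i <;> fin_cases j <;>
      first
        | exact hya.symm
        | exact hza.symm
        | exact hyz.symm
        | exact hxz.symm
        | exact hxy.symm
        | exact hyw
        | exact hxw
        | exact hxb
        | exact hwb
        | (revert hij hle; norm_num)
end

section
/- Let n ≥ 11 with n ≡ 2 or 4 (mod 6) (in particular n is even), and let G be a triangle-free graph on n vertices with e(G) ≥ n²/4 − 1. Then G is isomorphic to the complete bipartite graph K_{n/2, n/2}, or to K_{n/2, n/2} with one edge deleted, or to the complete bipartite graph K_{n/2 − 1, n/2 + 1}. -/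
open SimpleGraph

open Finset

/-- The canonical equivalence sending `Aᶜ` to the left part and `A` to the right part. -/
noncomputable def crossEquiv {n : ℕ} (A : Finset (Fin n)) {p q : ℕ}
    (hp : #Aᶜ = p) (hq : #A = q) : Fin n ≃ (Fin p ⊕ Fin q) :=
  ((Equiv.sumCompl (· ∈ A)).symm.trans (Equiv.sumComm _ _)).trans
    (Equiv.sumCongr
      (((Equiv.subtypeEquivRight (fun x => by simp)).trans
        (Aᶜ.orderIsoOfFin hp).toEquiv.symm))
      ((A.orderIsoOfFin hq).toEquiv.symm))

lemma crossEquiv_isRight {n : ℕ} (A : Finset (Fin n)) {p q : ℕ}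
    (hp : #Aᶜ = p) (hq : #A = q) (x : Fin n) :
    (crossEquiv A hp hq x).isRight = true ↔ x ∈ A := by
  by_cases hx : x ∈ A <;>
    simp [crossEquiv, Equiv.sumCompl_symm_apply_of_pos, Equiv.sumCompl_symm_apply_of_neg, hx]

lemma iso_cross {n : ℕ} (G : SimpleGraph (Fin n)) (A : Finset (Fin n)) {p q : ℕ}
    (hp : #Aᶜ = p) (hq : #A = q)
    (h : ∀ x y, G.Adj x y ↔ ¬(x ∈ A ↔ y ∈ A)) :
    Nonempty (G ≃g completeBipartiteGraph (Fin p) (Fin q)) := by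
  refine ⟨⟨crossEquiv A hp hq, ?_⟩⟩
  intro x y
  have hx := crossEquiv_isRight A hp hq x
  have hy := crossEquiv_isRight A hp hq y
  simp only [completeBipartiteGraph_adj, h, Equiv.coe_fn_mk]
  rcases hex : crossEquiv A hp hq x with a | a <;>
  rcases hey : crossEquiv A hp hq y with b | b <;>
    rw [hex] at hx <;> rw [hey] at hy <;> simp_all

lemma iso_cross_del {n : ℕ} (G : SimpleGraph (Fin n)) (A : Finset (Fin n)) {p q : ℕ}
    (hp : #Aᶜ = p) (hq : #A = q) (p0 v0 : Fin n) (hp0 : p0 ∈ A) (hv0 : v0 ∉ A)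
    (h : ∀ x y, G.Adj x y ↔
      (¬(x ∈ A ↔ y ∈ A) ∧ ¬(x = p0 ∧ y = v0) ∧ ¬(x = v0 ∧ y = p0))) :
    ∃ e ∈ (completeBipartiteGraph (Fin p) (Fin q)).edgeSet,
      Nonempty (G ≃g (completeBipartiteGraph (Fin p) (Fin q)).deleteEdges {e}) := by
  set φ := crossEquiv A hp hq with hφ
  have hrx := crossEquiv_isRight A hp hq
  refine ⟨s(φ v0, φ p0), ?_, ⟨⟨φ, ?_⟩⟩⟩
  · rw [mem_edgeSet, completeBipartiteGraph_adj]
    left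
    constructor
    · rcases he : φ v0 with a | a
      · simp
      · exfalso; have := hrx v0; rw [← hφ, he] at this; simp at this; exact hv0 this
    · rcases he : φ p0 with a | a
      · exfalso; have := hrx p0; rw [← hφ, he] at this; simp at this; exact this hp0
      · simp
  · intro x y
    rw [deleteEdges_adj, h x y, Set.mem_singleton_iff, Sym2.eq_iff]
    have hinj : ∀ a b : Fin n, φ a = φ b ↔ a = b := fun a b => EmbeddingLike.apply_eq_iff_eq φ
    have hx := hrx x; have hy := hrx y
    rw [← hφ] at hx hy
    have hcb : (completeBipartiteGraph (Fin p) (Fin q)).Adj (φ x) (φ y) ↔ ¬(x ∈ A ↔ y ∈ A) := by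
      rcases hex : φ x with a | a <;> rcases hey : φ y with b | b <;>
        rw [hex] at hx <;> rw [hey] at hy <;> simp_all
    rw [hcb, hinj, hinj, hinj, hinj]
    tauto

lemma adj_iff_of_parts {n : ℕ} (G : SimpleGraph (Fin n)) (A : Finset (Fin n))
    (hA : ∀ x ∈ A, ∀ y ∈ A, ¬G.Adj x y) (hB : ∀ x ∈ Aᶜ, ∀ y ∈ Aᶜ, ¬G.Adj x y)
    (hfull : ∀ v ∈ Aᶜ, ∀ w ∈ A, G.Adj v w) :
    ∀ x y, G.Adj x y ↔ ¬(x ∈ A ↔ y ∈ A) := by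
  intro x y
  constructor
  · intro hxy
    by_cases hx : x ∈ A <;> by_cases hy : y ∈ A
    · exact absurd hxy (hA x hx y hy)
    · tauto
    · tauto
    · exact absurd hxy (hB x (mem_compl.2 hx) y (mem_compl.2 hy))
  · intro hne
    by_cases hx : x ∈ A <;> by_cases hy : y ∈ A
    · tauto
    · exact (hfull y (mem_compl.2 hy) x hx).symm
    · exact hfull x (mem_compl.2 hx) y hy
    · tauto

lemma adj_iff_of_parts_del {n : ℕ} (G : SimpleGraph (Fin n)) (A : Finset (Fin n))
    (p0 v0 : Fin n) (hp0 : p0 ∈ A) (hv0 : v0 ∉ A)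
    (hA : ∀ x ∈ A, ∀ y ∈ A, ¬G.Adj x y) (hB : ∀ x ∈ Aᶜ, ∀ y ∈ Aᶜ, ¬G.Adj x y)
    (hfull : ∀ v ∈ Aᶜ, ∀ w ∈ A, ¬(w = p0 ∧ v = v0) → G.Adj v w)
    (hmiss : ¬ G.Adj v0 p0) :
    ∀ x y, G.Adj x y ↔
      (¬(x ∈ A ↔ y ∈ A) ∧ ¬(x = p0 ∧ y = v0) ∧ ¬(x = v0 ∧ y = p0)) := by
  intro x y
  constructor
  · intro hxy
    refine ⟨?_, ?_, ?_⟩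
    · by_cases hx : x ∈ A <;> by_cases hy : y ∈ A
      · exact absurd hxy (hA x hx y hy)
      · tauto
      · tauto
      · exact absurd hxy (hB x (mem_compl.2 hx) y (mem_compl.2 hy))
    · rintro ⟨rfl, rfl⟩; exact hmiss hxy.symm
    · rintro ⟨rfl, rfl⟩; exact hmiss hxy
  · rintro ⟨hside, h12, h13⟩
    by_cases hx : x ∈ A <;> by_cases hy : y ∈ A
    · tauto
    · exact (hfull y (mem_compl.2 hy) x hx (fun hc => h12 ⟨hc.1, hc.2⟩)).symm
    · exact hfull x (mem_compl.2 hx) y hy (fun hc => h13 ⟨hc.2, hc.1⟩)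
    · tauto

set_option maxHeartbeats 1000000 in
/-- For `n ≥ 11` with `n ≡ 2, 4 (mod 6)`, every triangle-free graph on `n` vertices with
at least `n²/4 - 1` edges is `K_{n/2,n/2}`, `K_{n/2,n/2}` minus one edge, or
`K_{n/2-1,n/2+1}`. -/
theorem stmt5 (n : ℕ) (hn : 11 ≤ n) (hmod : n % 6 = 2 ∨ n % 6 = 4)
    (G : SimpleGraph (Fin n)) (htf : G.CliqueFree 3)
    (he : n ^ 2 / 4 - 1 ≤ edgeCount G) :
    Nonempty (G ≃g completeBipartiteGraph (Fin (n / 2)) (Fin (n / 2))) ∨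
    (∃ e ∈ (completeBipartiteGraph (Fin (n / 2)) (Fin (n / 2))).edgeSet,
      Nonempty (G ≃g (completeBipartiteGraph (Fin (n / 2)) (Fin (n / 2))).deleteEdges {e})) ∨
    Nonempty (G ≃g completeBipartiteGraph (Fin (n / 2 - 1)) (Fin (n / 2 + 1))) := by
  classical
  have h2 : n % 2 = 0 := by omega
  set k := n / 2 with hk
  have hnk : n = 2 * k := by omega
  have hk7 : 7 ≤ k := by omega
  have hEC : edgeCount G = #G.edgeFinset := by
    simp [edgeCount, SimpleGraph.edgeFinset, Set.ncard_eq_toFinset_card']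
  set E := #G.edgeFinset with hE
  have heE : k * k ≤ E + 1 := by
    have h4 : n ^ 2 = 4 * (k * k) := by rw [hnk]; ring
    rw [hEC] at he
    omega
  -- max degree vertex
  have : Nonempty (Fin n) := ⟨⟨0, by omega⟩⟩
  obtain ⟨u, -, hu⟩ := Finset.exists_max_image (Finset.univ : Finset (Fin n))
    (fun v => G.degree v) Finset.univ_nonempty
  set A := G.neighborFinset u with hA
  set a := #A with ha
  have hdeg : ∀ v, G.degree v ≤ a := by
    intro v
    rw [ha, hA, G.card_neighborFinset_eq_degree]
    exact hu v (mem_univ v)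
  have htri : ∀ x y z : Fin n, G.Adj x y → G.Adj x z → G.Adj y z → False := by
    intro x y z h1 h2 h3
    exact htf {x, y, z} (is3Clique_triple_iff.2 ⟨h1, h2, h3⟩)
  have hAind : ∀ x ∈ A, ∀ y ∈ A, ¬ G.Adj x y := by
    intro x hx y hy hxy
    exact htri u x y ((mem_neighborFinset G u x).1 hx) ((mem_neighborFinset G u y).1 hy) hxy
  -- counting functions
  set f : Fin n → ℕ := fun v => #(A.filter (fun w => G.Adj v w)) with hf
  set g : Fin n → ℕ := fun v => #(Aᶜ.filter (fun w => G.Adj v w)) with hg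
  have hfle : ∀ v, f v ≤ a := fun v => card_le_card (filter_subset _ _)
  have hfg : ∀ v, f v + g v = G.degree v := by
    intro v
    rw [hf, hg]
    have hd : Disjoint (A.filter (fun w => G.Adj v w)) (Aᶜ.filter (fun w => G.Adj v w)) :=
      disjoint_filter_filter disjoint_compl_right
    rw [← card_union_of_disjoint hd, ← filter_union, union_compl,
      ← neighborFinset_eq_filter, G.card_neighborFinset_eq_degree]
  have hfA : ∀ v ∈ A, f v = 0 := by
    intro v hv
    rw [hf]
    simp only [card_eq_zero, filter_eq_empty_iff]
    intro w hw
    exact hAind v hv w hw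
  have hcross : ∑ v ∈ A, g v = ∑ w ∈ Aᶜ, f w := by
    simp only [hf, hg, card_filter]
    rw [Finset.sum_comm]
    exact Finset.sum_congr rfl fun w _ => Finset.sum_congr rfl fun v _ => by rw [G.adj_comm]
  have h2E : 2 * E = 2 * ∑ v ∈ Aᶜ, f v + ∑ v ∈ Aᶜ, g v := by
    have hhs : ∑ v, G.degree v = 2 * E := G.sum_degrees_eq_twice_card_edges
    have hsplit : ∑ v ∈ A, G.degree v + ∑ v ∈ Aᶜ, G.degree v = ∑ v, G.degree v :=
      Finset.sum_add_sum_compl A _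
    have h1 : ∑ v ∈ A, G.degree v = ∑ v ∈ Aᶜ, f v := by
      rw [← hcross]
      exact sum_congr rfl fun v hv => by rw [← hfg v, hfA v hv, zero_add]
    have h2' : ∑ v ∈ Aᶜ, G.degree v = ∑ v ∈ Aᶜ, f v + ∑ v ∈ Aᶜ, g v := by
      rw [← Finset.sum_add_distrib]
      exact sum_congr rfl fun v _ => (hfg v).symm
    omega
  set b := #Aᶜ with hb
  have hab : a + b = n := by
    rw [ha, hb, card_add_card_compl, Fintype.card_fin]
  set M := ∑ v ∈ Aᶜ, (a - f v) with hM
  have hMf : ∑ v ∈ Aᶜ, f v + M = a * b := by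
    rw [hM, ← Finset.sum_add_distrib]
    rw [Finset.sum_congr rfl (fun v _ => by have := hfle v; omega : ∀ v ∈ Aᶜ, f v + (a - f v) = a)]
    rw [Finset.sum_const, smul_eq_mul, mul_comm]
  have hgle : ∀ v, g v ≤ a - f v := fun v => by
    have h1 := hfg v; have h2 := hdeg v; omega
  have hgM : ∑ v ∈ Aᶜ, g v ≤ M := sum_le_sum fun v _ => hgle v
  have key1 : 2 * E + M ≤ 2 * (a * b) := by omega
  -- a ≥ k
  have hak : k ≤ a := by
    by_contra hlt
    push_neg at hlt
    have hsd : ∑ v, G.degree v = 2 * E := G.sum_degrees_eq_twice_card_edges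
    have hna : ∑ v, G.degree v ≤ n * a := by
      calc ∑ v, G.degree v ≤ ∑ _v : Fin n, a := sum_le_sum fun v _ => hdeg v
        _ = n * a := by rw [sum_const, card_univ, Fintype.card_fin, smul_eq_mul]
    have hna2 : n * a + n ≤ n * k := by
      have h5 : a + 1 ≤ k := hlt
      calc n * a + n = n * (a + 1) := by ring
        _ ≤ n * k := Nat.mul_le_mul_left n h5
    have hkk : n * k = 2 * (k * k) := by rw [hnk]; ring
    omega
  set t := a - k with ht
  have htk : t ≤ k := by omega
  have hat : a = k + t := by omega
  have hbt : b = k - t := by omega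
  have hprod : a * b + t * t = k * k := by
    rw [hat, hbt]
    zify [htk]
    ring
  have ht1 : t ≤ 1 := by
    by_contra h5
    push_neg at h5
    have : 4 ≤ t * t := Nat.mul_le_mul h5 h5
    omega
  have hMt : M + 2 * (t * t) ≤ 2 := by omega
  -- fullness helper
  have hfull_of : ∀ v ∈ Aᶜ, f v = a → ∀ w ∈ A, G.Adj v w := by
    intro v _hv hfv w hw
    have hfv' : f v = #(A.filter (fun w => G.Adj v w)) := rfl
    have h14 : #A ≤ #(A.filter (fun w => G.Adj v w)) := by omega
    have h15 : A.filter (fun w => G.Adj v w) = A :=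
      eq_of_subset_of_card_le (filter_subset _ _) h14
    exact (mem_filter.1 (h15 ▸ hw)).2
  have ht01 : t = 0 ∨ t = 1 := by omega
  rcases ht01 with ht0 | ht0
  · -- a = k : K_{k,k} or K_{k,k} minus an edge
    have htt : t * t = 0 := by rw [ht0]
    have hM2 : M ≤ 2 := by omega
    have hBind : ∀ x ∈ Aᶜ, ∀ y ∈ Aᶜ, ¬ G.Adj x y := by
      intro x hx y hy hxy
      have hne : x ≠ y := G.ne_of_adj hxy
      have hdisjf : Disjoint (A.filter (fun w => G.Adj x w)) (A.filter (fun w => G.Adj y w)) := by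
        rw [Finset.disjoint_left]
        intro z hz1 hz2
        exact htri x y z hxy (mem_filter.1 hz1).2 (mem_filter.1 hz2).2
      have hfxy : f x + f y ≤ a := by
        rw [hf]
        rw [← card_union_of_disjoint hdisjf]
        exact card_le_card (union_subset (filter_subset _ _) (filter_subset _ _))
      have hMge : (a - f x) + (a - f y) ≤ M := by
        have hsub : ({x, y} : Finset (Fin n)) ⊆ Aᶜ := by
          intro z hz
          rcases mem_insert.1 hz with rfl | hz
          · exact hx
          · rw [mem_singleton.1 hz]; exact hy
        have h20 := Finset.sum_le_sum_of_subset (f := fun v => a - f v) hsub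
        rw [Finset.sum_pair hne] at h20
        exact h20.trans_eq hM.symm
      have h6 := hfle x
      have h7 := hfle y
      omega
    have hg0 : ∀ v ∈ Aᶜ, g v = 0 := by
      intro v hv
      rw [hg]
      simp only [card_eq_zero, filter_eq_empty_iff]
      intro w hw
      exact hBind v hv w hw
    have hEf : E = ∑ v ∈ Aᶜ, f v := by
      have : ∑ v ∈ Aᶜ, g v = 0 := Finset.sum_eq_zero hg0
      omega
    have hM1 : M ≤ 1 := by omega
    have hM01 : M = 0 ∨ M = 1 := by omega
    rcases hM01 with hM0 | hM0
    · -- complete bipartite K_{k,k}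
      have hfa : ∀ v ∈ Aᶜ, f v = a := by
        intro v hv
        have hz : ∑ v ∈ Aᶜ, (a - f v) = 0 := by omega
        have h8 := Finset.sum_eq_zero_iff.1 hz v hv
        have := hfle v
        omega
      have hadj := adj_iff_of_parts G A hAind hBind
        (fun v hv w hw => hfull_of v hv (hfa v hv) w hw)
      exact Or.inl (iso_cross G A (by omega) (by omega) hadj)
    · -- one missing edge
      have hex : ∃ v0 ∈ Aᶜ, 1 ≤ a - f v0 := by
        by_contra h9
        push_neg at h9
        have : M = 0 := by
          rw [hM]
          exact Finset.sum_eq_zero fun v hv => by have := h9 v hv; omega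
        omega
      obtain ⟨v0, hv0B, hv0⟩ := hex
      have hskip : (a - f v0) + ∑ x ∈ Aᶜ.erase v0, (a - f x) = M :=
        Finset.add_sum_erase Aᶜ (fun v => a - f v) hv0B
      have hrest : ∀ v ∈ Aᶜ, v ≠ v0 → f v = a := by
        intro v hv hne
        have hvz : v ∈ Aᶜ.erase v0 := mem_erase.2 ⟨hne, hv⟩
        have h10 : ∑ x ∈ Aᶜ.erase v0, (a - f x) = 0 := by omega
        have h11 := Finset.sum_eq_zero_iff.1 h10 v hvz
        have := hfle v
        omega
      have hcard1 : #(A \ A.filter (fun w => G.Adj v0 w)) = 1 := by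
        rw [card_sdiff_of_subset (filter_subset _ _)]
        have hfv' : f v0 = #(A.filter (fun w => G.Adj v0 w)) := rfl
        omega
      obtain ⟨p0, hp0⟩ := card_eq_one.1 hcard1
      have hp0m : p0 ∈ A \ A.filter (fun w => G.Adj v0 w) := hp0 ▸ mem_singleton_self p0
      have hp0A : p0 ∈ A := (mem_sdiff.1 hp0m).1
      have hp0n : ¬ G.Adj v0 p0 := fun h =>
        (mem_sdiff.1 hp0m).2 (mem_filter.2 ⟨hp0A, h⟩)
      have hv0full : ∀ w ∈ A, w ≠ p0 → G.Adj v0 w := by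
        intro w hw hne
        by_contra h11
        have h12 : w ∈ A \ A.filter (fun w => G.Adj v0 w) :=
          mem_sdiff.2 ⟨hw, fun hc => h11 (mem_filter.1 hc).2⟩
        rw [hp0] at h12
        exact hne (mem_singleton.1 h12)
      have hv0A : v0 ∉ A := mem_compl.1 hv0B
      have hfullother : ∀ v ∈ Aᶜ, v ≠ v0 → ∀ w ∈ A, G.Adj v w := fun v hv hne =>
        hfull_of v hv (hrest v hv hne)
      have hfullx : ∀ v ∈ Aᶜ, ∀ w ∈ A, ¬(w = p0 ∧ v = v0) → G.Adj v w := by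
        intro v hv w hw hc
        by_cases hvv : v = v0
        · subst hvv
          exact hv0full w hw (fun hwp => hc ⟨hwp, rfl⟩)
        · exact hfullother v hv hvv w hw
      have hadj := adj_iff_of_parts_del G A p0 v0 hp0A hv0A hAind hBind hfullx hp0n
      exact Or.inr (Or.inl (iso_cross_del G A (by omega) (by omega) p0 v0 hp0A hv0A hadj))
  · -- a = k + 1 : K_{k-1,k+1}
    have htt : t * t = 1 := by rw [ht0]
    have hM0 : M = 0 := by omega
    have hfa : ∀ v ∈ Aᶜ, f v = a := by
      intro v hv
      have hz : ∑ v ∈ Aᶜ, (a - f v) = 0 := by omega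
      have h8 := Finset.sum_eq_zero_iff.1 hz v hv
      have := hfle v
      omega
    have hg0 : ∀ v ∈ Aᶜ, g v = 0 := by
      intro v hv
      have h8 := hgle v
      have h9 := hfa v hv
      omega
    have hBind : ∀ x ∈ Aᶜ, ∀ y ∈ Aᶜ, ¬ G.Adj x y := by
      intro x hx y hy hxy
      have h8 : y ∈ Aᶜ.filter (fun w => G.Adj x w) := mem_filter.2 ⟨hy, hxy⟩
      have h9 : 0 < g x := card_pos.2 ⟨y, h8⟩
      have := hg0 x hx
      omega
    have hadj := adj_iff_of_parts G A hAind hBind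
      (fun v hv w hw => hfull_of v hv (hfa v hv) w hw)
    exact Or.inr (Or.inr (iso_cross G A (by omega) (by omega) hadj))
end

section
/- Let n ≥ 11 with n ≡ 3 (mod 6), and let G be a triangle-free graph on n vertices with e(G) ≥ ⌊n²/4⌋ − 2. Then G is obtained from the complete bipartite graph K_{⌊n/2⌋, ⌈n/2⌉} by deleting at most two edges, or G is isomorphic to the complete bipartite graph K_{⌊n/2⌋ − 1, ⌈n/2⌉ + 1}. -/
open SimpleGraph Finset

lemma exists_segment {V : Type*} {G : SimpleGraph V} {u v : V} (w : G.Walk u v) :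
    ∀ i j, i ≤ j → j ≤ w.length →
      ∃ p : G.Walk (w.getVert i) (w.getVert j), p.length = j - i := by
  intro i j hij hj
  induction j, hij using Nat.le_induction with
  | base => exact ⟨Walk.nil, by simp⟩
  | succ j hij IH =>
    obtain ⟨p, hp⟩ := IH (by omega)
    exact ⟨p.concat (w.adj_getVert_succ (by omega)), by
      rw [Walk.length_concat, hp]; omega⟩


lemma mantel_aux {V : Type*} [Fintype V] [DecidableEq V] (G : SimpleGraph V)
    [DecidableRel G.Adj] (htf : G.CliqueFree 3) :
    ∀ (a : ℕ) (A : Finset V) [DecidablePred fun e : Sym2 V => ∀ x ∈ e, x ∈ A], A.card = a →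
      (G.edgeFinset.filter (fun e => ∀ x ∈ e, x ∈ A)).card ≤ a ^ 2 / 4 := by
  intro a
  induction a using Nat.strong_induction_on with
  | _ a IH =>
  intro A _ hA
  by_cases hE : (G.edgeFinset.filter (fun e => ∀ x ∈ e, x ∈ A)) = ∅
  · simp [hE]
  obtain ⟨e, he⟩ := Finset.nonempty_iff_ne_empty.mpr hE
  rw [Finset.mem_filter, mem_edgeFinset] at he
  obtain ⟨hee, hPe⟩ := he
  induction e using Sym2.ind with
  | _ u v =>
  rw [mem_edgeSet] at hee
  have hu : u ∈ A := hPe u (by simp)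
  have hv : v ∈ A := hPe v (by simp)
  have hne : u ≠ v := hee.ne
  have ha2 : 2 ≤ a := hA ▸ Finset.one_lt_card.mpr ⟨u, hu, v, hv, hne⟩
  set A' : Finset V := (A.erase u).erase v with hA'
  have hvA : v ∈ A.erase u := Finset.mem_erase.mpr ⟨hne.symm, hv⟩
  have hA'card : A'.card = a - 2 := by
    rw [hA', Finset.card_erase_of_mem hvA, Finset.card_erase_of_mem hu, hA]
    omega
  set E := G.edgeFinset.filter (fun e => ∀ x ∈ e, x ∈ A) with hEdef
  -- split by whether the edge meets {u, v}
  have hsplit := Finset.card_filter_add_card_filter_not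
    (s := E) (p := fun e => u ∈ e ∨ v ∈ e)
  have hsub : E.filter (fun e => ¬(u ∈ e ∨ v ∈ e))
      ⊆ G.edgeFinset.filter (fun e => ∀ x ∈ e, x ∈ A') := by
    intro e' he'
    rw [Finset.mem_filter] at he' ⊢
    obtain ⟨he'E, hm⟩ := he'
    rw [hEdef, Finset.mem_filter] at he'E
    refine ⟨he'E.1, fun x hx => ?_⟩
    push_neg at hm
    refine Finset.mem_erase.mpr ⟨?_, Finset.mem_erase.mpr ⟨?_, he'E.2 x hx⟩⟩
    · rintro rfl; exact hm.2 hx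
    · rintro rfl; exact hm.1 hx
  have h2 : (E.filter (fun e => ¬(u ∈ e ∨ v ∈ e))).card ≤ (a-2)^2/4 :=
    le_trans (Finset.card_le_card hsub)
      (IH (a-2) (by omega) A' hA'card)
  -- edges meeting {u,v}
  have h1 : (E.filter (fun e => u ∈ e ∨ v ∈ e)).card ≤ a - 1 := by
    classical
    have hmap : ∀ e' ∈ E.filter (fun e => u ∈ e ∨ v ∈ e),
        (if h : u ∈ e' then Sym2.Mem.other' h
          else if h2 : v ∈ e' then Sym2.Mem.other' h2 else u) ∈ A.erase u := by
      intro e' he'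
      rw [Finset.mem_filter, hEdef, Finset.mem_filter, mem_edgeFinset] at he'
      obtain ⟨⟨heE, hPA⟩, hM⟩ := he'
      by_cases h : u ∈ e'
      · simp only [h, dif_pos]
        have hspec := Sym2.other_spec' h
        have hadj : G.Adj u (Sym2.Mem.other' h) := by
          rw [← mem_edgeSet, hspec]; exact heE
        exact Finset.mem_erase.mpr ⟨hadj.ne', hPA _ (Sym2.other_mem' h)⟩
      · have h2' : v ∈ e' := hM.resolve_left h
        simp only [h, dif_neg, not_false_iff, h2', dif_pos]
        refine Finset.mem_erase.mpr ⟨?_, hPA _ (Sym2.other_mem' h2')⟩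
        rintro rfl; exact h (Sym2.other_mem' h2')
    have hinj : Set.InjOn (fun e' => (if h : u ∈ e' then Sym2.Mem.other' h
          else if h2 : v ∈ e' then Sym2.Mem.other' h2 else u))
        (E.filter (fun e => u ∈ e ∨ v ∈ e)) := by
      intro e1 he1 e2 he2 heq
      simp only at heq
      rw [Finset.mem_coe, Finset.mem_filter, hEdef, Finset.mem_filter, mem_edgeFinset] at he1 he2
      obtain ⟨⟨h1E, _⟩, h1M⟩ := he1
      obtain ⟨⟨h2E, _⟩, h2M⟩ := he2
      -- helper: reconstruct each edge
      have key : ∀ (z : Sym2 V), z ∈ G.edgeSet → (u ∈ z ∨ v ∈ z) → ∀ x,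
          (if h : u ∈ z then Sym2.Mem.other' h
            else if h2 : v ∈ z then Sym2.Mem.other' h2 else u) = x →
          (z = s(u, x) ∧ G.Adj u x) ∨ (z = s(v, x) ∧ G.Adj v x ∧ u ∉ z) := by
        intro z hzE hzM x hx
        by_cases h : u ∈ z
        · left
          simp only [h, dif_pos] at hx
          constructor
          · rw [← hx]; exact (Sym2.other_spec' h).symm
          · rw [← mem_edgeSet, ← hx, Sym2.other_spec' h]; exact hzE
        · right
          have h2' : v ∈ z := hzM.resolve_left h
          simp only [h, dif_neg, not_false_iff, h2', dif_pos] at hx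
          refine ⟨by rw [← hx]; exact (Sym2.other_spec' h2').symm, ?_, h⟩
          rw [← mem_edgeSet, ← hx, Sym2.other_spec' h2']; exact hzE
      set x := (if h : u ∈ e1 then Sym2.Mem.other' h
          else if h2 : v ∈ e1 then Sym2.Mem.other' h2 else u) with hx
      obtain k1 := key e1 h1E h1M x rfl
      obtain k2 := key e2 h2E h2M x heq.symm
      rcases k1 with ⟨e1eq, hadj1⟩ | ⟨e1eq, hadj1, hu1⟩ <;>
        rcases k2 with ⟨e2eq, hadj2⟩ | ⟨e2eq, hadj2, hu2⟩
      · rw [e1eq, e2eq]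
      · exact absurd (SimpleGraph.is3Clique_triple_iff.mpr ⟨hee, hadj1, hadj2⟩) (htf _)
      · exact absurd (SimpleGraph.is3Clique_triple_iff.mpr ⟨hee, hadj2, hadj1⟩) (htf _)
      · rw [e1eq, e2eq]
    calc (E.filter (fun e => u ∈ e ∨ v ∈ e)).card
        ≤ (A.erase u).card := Finset.card_le_card_of_injOn _ hmap hinj
      _ = a - 1 := by rw [Finset.card_erase_of_mem hu, hA]
  rw [← hsplit]
  obtain ⟨b, rfl⟩ : ∃ b, a = b + 2 := ⟨a - 2, by omega⟩
  have harith : (b+2)^2 = b^2 + 4*(b+1) := by ring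
  simp only [Nat.add_sub_cancel] at h1 h2 ⊢
  calc (E.filter (fun e => u ∈ e ∨ v ∈ e)).card +
        (E.filter (fun e => ¬(u ∈ e ∨ v ∈ e))).card
      ≤ (b + 1) + b^2/4 := by
        have : b + 2 - 1 = b + 1 := by omega
        omega
    _ = (b+2)^2/4 := by rw [harith, Nat.add_mul_div_left _ _ (by norm_num : 0 < 4)]; omega

section
variable {n : ℕ} (G : SimpleGraph (Fin n)) [DecidableRel G.Adj]

lemma nonbip_bound (htf : G.CliqueFree 3) (hn : 15 ≤ n)
    (hex : ∃ ℓ, Odd ℓ ∧ ∃ (v : Fin n) (w : G.Walk v v), w.length = ℓ) :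
    4 * G.edgeFinset.card + 13 ≤ n ^ 2 := by
  classical
  obtain ⟨hgodd, v0, c, hc⟩ := Nat.find_spec hex
  set g := Nat.find hex with hgdef
  have hmin : ∀ (x : Fin n) (w : G.Walk x x), Odd w.length → g ≤ w.length :=
    fun x w hw => Nat.find_min' hex ⟨hw, x, w, rfl⟩
  have hgmod : g % 2 = 1 := Nat.odd_iff.mp hgodd
  have hzero : c.getVert 0 = v0 := c.getVert_zero
  have hgv : c.getVert g = v0 := by rw [← hc]; exact c.getVert_length
  -- g ≥ 5
  have hg1 : g ≠ 1 := by
    intro h1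
    have hadj := c.adj_getVert_succ (i := 0) (by omega)
    rw [hzero] at hadj
    have h1' : c.getVert 1 = v0 := by rw [← h1]; exact hgv
    rw [h1'] at hadj
    exact G.loopless.irrefl _ hadj
  have hg3 : g ≠ 3 := by
    intro h3
    have a01 := c.adj_getVert_succ (i := 0) (by omega)
    have a12 := c.adj_getVert_succ (i := 1) (by omega)
    have a23 := c.adj_getVert_succ (i := 2) (by omega)
    have h3' : c.getVert 3 = v0 := by rw [← h3]; exact hgv
    have h30 : c.getVert (2+1) = c.getVert 0 := by rw [h3'.trans hzero.symm]
    have a20 : G.Adj (c.getVert 2) (c.getVert 0) := h30 ▸ a23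
    rw [hzero] at a20
    norm_num at a01 a12
    exact htf _ (is3Clique_triple_iff.mpr ⟨a01, a20.symm, a12⟩)
  have hg5 : 5 ≤ g := by
    rcases hgodd with ⟨k, hk⟩
    omega
  -- distinctness of cycle vertices
  have hdist : ∀ i j, i < j → j ≤ g → ¬(i = 0 ∧ j = g) → c.getVert i ≠ c.getVert j := by
    intro i j hij hjg hne heq
    obtain ⟨p, hp⟩ := exists_segment c i j (le_of_lt hij) (by omega)
    obtain ⟨q1, hq1⟩ := exists_segment c j g (by omega) (by omega)
    obtain ⟨q2, hq2⟩ := exists_segment c 0 i (by omega) (by omega)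
    by_cases hodd1 : Odd (j - i)
    · have hb := hmin _ (p.copy rfl heq.symm) (by rwa [Walk.length_copy, hp])
      rw [Walk.length_copy, hp] at hb
      exact hne ⟨by omega, by omega⟩
    · have hodd2 : Odd (((q2.copy hzero rfl).append (q1.copy heq.symm hgv)).length) := by
        rw [Walk.length_append, Walk.length_copy, Walk.length_copy, hq1, hq2, Nat.odd_iff]
        rw [Nat.odd_iff] at hodd1
        omega
      have hb := hmin _ _ hodd2
      rw [Walk.length_append, Walk.length_copy, Walk.length_copy, hq1, hq2] at hb
      omega
  -- pair lemma
  have hpair : ∀ (x : Fin n) i j, i < j → j ≤ g - 1 → G.Adj x (c.getVert i) →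
      G.Adj x (c.getVert j) → j - i = 2 ∨ j - i = g - 2 := by
    intro x i j hij hjg hxi hxj
    obtain ⟨p, hp⟩ := exists_segment c i j (le_of_lt hij) (by omega)
    obtain ⟨q1, hq1⟩ := exists_segment c j g (by omega) (by omega)
    obtain ⟨q2, hq2⟩ := exists_segment c 0 i (by omega) (by omega)
    by_cases hodd1 : Odd ((Walk.cons hxi (p.concat hxj.symm)).length)
    · have hb := hmin _ _ hodd1
      rw [Walk.length_cons, Walk.length_concat, hp] at hb hodd1
      rw [Nat.odd_iff] at hodd1
      right; omega
    · have hodd2 : Odd ((Walk.cons hxj ((q1.copy rfl hgv).append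
          ((q2.copy hzero rfl).concat hxi.symm))).length) := by
        rw [Walk.length_cons, Walk.length_append, Walk.length_copy, Walk.length_concat,
          Walk.length_copy, hq1, hq2, Nat.odd_iff]
        rw [Walk.length_cons, Walk.length_concat, hp, Nat.odd_iff] at hodd1
        omega
      have hb := hmin _ _ hodd2
      rw [Walk.length_cons, Walk.length_append, Walk.length_copy, Walk.length_concat,
        Walk.length_copy, hq1, hq2] at hb hodd2
      rw [Nat.odd_iff] at hodd2
      left; omega
  -- chord lemma
  have hchord : ∀ i j, i < j → j ≤ g - 1 → G.Adj (c.getVert i) (c.getVert j) →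
      j - i = 1 ∨ (i = 0 ∧ j = g - 1) := by
    intro i j hij hjg hadj
    obtain ⟨p, hp⟩ := exists_segment c i j (le_of_lt hij) (by omega)
    obtain ⟨q1, hq1⟩ := exists_segment c j g (by omega) (by omega)
    obtain ⟨q2, hq2⟩ := exists_segment c 0 i (by omega) (by omega)
    by_cases hodd1 : Odd ((p.concat hadj.symm).length)
    · have hb := hmin _ _ hodd1
      rw [Walk.length_concat, hp] at hb hodd1
      rw [Nat.odd_iff] at hodd1
      right; constructor <;> omega
    · have hodd2 : Odd (((q1.copy rfl hgv).append ((q2.copy hzero rfl).concat hadj)).length) := by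
        rw [Walk.length_append, Walk.length_copy, Walk.length_concat, Walk.length_copy,
          hq1, hq2, Nat.odd_iff]
        rw [Walk.length_concat, hp, Nat.odd_iff] at hodd1
        omega
      have hb := hmin _ _ hodd2
      rw [Walk.length_append, Walk.length_copy, Walk.length_concat, Walk.length_copy,
        hq1, hq2] at hb hodd2
      rw [Nat.odd_iff] at hodd2
      left; omega
  -- the cycle vertex set
  set S : Finset (Fin n) := (Finset.range g).image c.getVert with hSdef
  have hinjOn : Set.InjOn c.getVert (Finset.range g) := by
    intro i hi j hj heq
    simp only [Finset.coe_range, Set.mem_Iio] at hi hj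
    by_contra hne
    rcases Nat.lt_or_ge i j with h | h
    · exact hdist i j h (by omega) (by omega) heq
    · exact hdist j i (by omega) (by omega) (by omega) heq.symm
  have hScard : S.card = g := by
    rw [hSdef, Finset.card_image_of_injOn (by simpa using hinjOn), Finset.card_range]
  have hgn : g ≤ n := by
    have := Finset.card_le_card (Finset.subset_univ S)
    rwa [hScard, Finset.card_univ, Fintype.card_fin] at this
  have hmemS : ∀ v ∈ S, ∃ i, i < g ∧ c.getVert i = v := by
    intro v hv
    rw [hSdef, Finset.mem_image] at hv
    obtain ⟨i, hi, hiv⟩ := hv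
    exact ⟨i, Finset.mem_range.mp hi, hiv⟩
  have htriple : ∀ (x : Fin n) i j k, i < j → j < k → k < g → G.Adj x (c.getVert i) →
      G.Adj x (c.getVert j) → G.Adj x (c.getVert k) → False := by
    intro x i j k hij hjk hkg hxi hxj hxk
    have d1 := hpair x i j hij (by omega) hxi hxj
    have d2 := hpair x j k hjk (by omega) hxj hxk
    have d3 := hpair x i k (by omega) (by omega) hxi hxk
    omega
  have htriple' : ∀ (x : Fin n) i j k, i ≠ j → j ≠ k → i ≠ k → i < g → j < g → k < g →
      G.Adj x (c.getVert i) → G.Adj x (c.getVert j) → G.Adj x (c.getVert k) → False := by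
    intro x i j k hij hjk hik hi hj hk hxi hxj hxk
    rcases Nat.lt_trichotomy i j with h1 | h1 | h1
    · rcases Nat.lt_trichotomy j k with h2 | h2 | h2
      · exact htriple x i j k h1 h2 hk hxi hxj hxk
      · exact hjk h2
      · rcases Nat.lt_trichotomy i k with h3 | h3 | h3
        · exact htriple x i k j h3 h2 hj hxi hxk hxj
        · exact hik h3
        · exact htriple x k i j h3 h1 hj hxk hxi hxj
    · exact hij h1
    · rcases Nat.lt_trichotomy i k with h3 | h3 | h3
      · exact htriple x j i k h1 h3 hk hxj hxi hxk
      · exact hik h3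
      · rcases Nat.lt_trichotomy j k with h2 | h2 | h2
        · exact htriple x j k i h2 h3 hi hxj hxk hxi
        · exact hjk h2
        · exact htriple x k j i h2 h1 hi hxk hxj hxi
  have htwo : ∀ x : Fin n, (G.neighborFinset x ∩ S).card ≤ 2 := by
    intro x
    by_contra hcard
    push_neg at hcard
    obtain ⟨a, b, cc, ha, hb, hcc, hab, hac, hbc⟩ := Finset.two_lt_card_iff.mp hcard
    rw [Finset.mem_inter, mem_neighborFinset] at ha hb hcc
    obtain ⟨ia, hia, hva⟩ := hmemS a ha.2
    obtain ⟨ib, hib, hvb⟩ := hmemS b hb.2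
    obtain ⟨ic, hic, hvc⟩ := hmemS cc hcc.2
    refine htriple' x ia ib ic ?_ ?_ ?_ hia hib hic
      (hva ▸ ha.1) (hvb ▸ hb.1) (hvc ▸ hcc.1)
    · rintro rfl; exact hab (hva ▸ hvb ▸ rfl)
    · rintro rfl; exact hbc (hvb ▸ hvc ▸ rfl)
    · rintro rfl; exact hac (hva ▸ hvc ▸ rfl)
  -- inner edges
  have hEin : (G.edgeFinset.filter (fun e => ∀ y ∈ e, y ∈ S)).card ≤ g := by
    have hexists : ∀ e ∈ G.edgeFinset.filter (fun e => ∀ y ∈ e, y ∈ S),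
        ∃ k, k < g ∧ c.getVert k ∈ e ∧ c.getVert ((k+1) % g) ∈ e := by
      intro e he
      rw [Finset.mem_filter, mem_edgeFinset] at he
      obtain ⟨heE, hPS⟩ := he
      induction e using Sym2.ind with
      | _ p q =>
        rw [mem_edgeSet] at heE
        obtain ⟨i, hi, hip⟩ := hmemS p (hPS p (by simp))
        obtain ⟨j, hj, hjq⟩ := hmemS q (hPS q (by simp))
        have hij : i ≠ j := by
          rintro rfl
          rw [hip] at hjq
          exact heE.ne (hjq ▸ rfl)
        rcases Nat.lt_or_ge i j with h | h
        · rcases hchord i j h (by omega) (by rw [hip, hjq]; exact heE) with h1 | ⟨h0, h1⟩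
          · refine ⟨i, by omega, by rw [hip]; simp, ?_⟩
            have hmod : (i+1) % g = j := by
              rw [Nat.mod_eq_of_lt (by omega)]; omega
            rw [hmod, hjq]; simp
          · have hq' : c.getVert (g-1) = q := by rw [← h1]; exact hjq
            have hp' : c.getVert 0 = p := by rw [← h0]; exact hip
            refine ⟨g-1, by omega, by rw [hq']; simp, ?_⟩
            have hmod : (g-1+1) % g = 0 := by
              have hg' : g - 1 + 1 = g := by omega
              rw [hg', Nat.mod_self]
            rw [hmod, hp']; simp
        · have h' : j < i := by omega
          rcases hchord j i h' (by omega) (by rw [hip, hjq]; exact heE.symm) with h1 | ⟨h0, h1⟩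
          · refine ⟨j, by omega, by rw [hjq]; simp, ?_⟩
            have hmod : (j+1) % g = i := by
              rw [Nat.mod_eq_of_lt (by omega)]; omega
            rw [hmod, hip]; simp
          · have hp' : c.getVert (g-1) = p := by rw [← h1]; exact hip
            have hq' : c.getVert 0 = q := by rw [← h0]; exact hjq
            refine ⟨g-1, by omega, by rw [hp']; simp, ?_⟩
            have hmod : (g-1+1) % g = 0 := by
              have hg' : g - 1 + 1 = g := by omega
              rw [hg', Nat.mod_self]
            rw [hmod, hq']; simp
    calc (G.edgeFinset.filter (fun e => ∀ y ∈ e, y ∈ S)).card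
        ≤ (Finset.range g).card := by
          apply Finset.card_le_card_of_injOn
            (fun e => if h : ∃ k, k < g ∧ c.getVert k ∈ e ∧ c.getVert ((k+1) % g) ∈ e
              then Nat.find h else 0)
          · intro e he
            have h := hexists e he
            simp only [h, dif_pos]
            exact Finset.mem_range.mpr (Nat.find_spec h).1
          · intro e1 he1 e2 he2 heq
            have h1 := hexists e1 he1
            have h2 := hexists e2 he2
            simp only [h1, h2, dif_pos] at heq
            obtain ⟨hk1, hm1, hm1'⟩ := Nat.find_spec h1
            obtain ⟨hk2, hm2, hm2'⟩ := Nat.find_spec h2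
            rw [heq] at hm1 hm1'
            set k := Nat.find h2
            have hkk : (k+1) % g < g := Nat.mod_lt _ (by omega)
            have hne : c.getVert k ≠ c.getVert ((k+1) % g) := by
              intro hcon
              have hkeq : k = (k+1) % g := hinjOn (by simp [hk2]) (by simp [hkk]) hcon
              rcases Nat.lt_or_ge (k+1) g with hlt | hge
              · rw [Nat.mod_eq_of_lt hlt] at hkeq; omega
              · have : k + 1 = g := by omega
                rw [this, Nat.mod_self] at hkeq
                omega
            have e1eq := (Sym2.mem_and_mem_iff hne).mp ⟨hm1, hm1'⟩
            have e2eq := (Sym2.mem_and_mem_iff hne).mp ⟨hm2, hm2'⟩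
            rw [e1eq, e2eq]
      _ = g := Finset.card_range g
  -- cross edges
  have hcross : (G.edgeFinset.filter
      (fun e => ¬(∀ y ∈ e, y ∈ S) ∧ ¬(∀ y ∈ e, y ∉ S))).card ≤ 2 * (n - g) := by
    set T := G.edgeFinset.filter (fun e => ¬(∀ y ∈ e, y ∈ S) ∧ ¬(∀ y ∈ e, y ∉ S)) with hT
    have hTout : ∀ e ∈ T, ∃ x ∈ e, x ∉ S := by
      intro e he
      rw [hT, Finset.mem_filter] at he
      push_neg at he
      exact he.2.1
    have hTin : ∀ e ∈ T, ∃ x ∈ e, x ∈ S := by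
      intro e he
      rw [hT, Finset.mem_filter] at he
      obtain ⟨-, -, h2⟩ := he
      push_neg at h2
      exact h2
    set φ : Sym2 (Fin n) → Fin n := fun e =>
      if h : ∃ x ∈ e, x ∉ S then h.choose else v0 with hφ
    have hφspec : ∀ e ∈ T, φ e ∈ e ∧ φ e ∉ S := by
      intro e he
      have h := hTout e he
      rw [hφ]
      simp only [h, dif_pos]
      exact h.choose_spec
    calc T.card ≤ 2 * (T.image φ).card := by
          apply Finset.card_le_mul_card_image
          intro b hb
          rw [Finset.mem_image] at hb
          obtain ⟨e0, he0, hbe0⟩ := hb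
          have hbS : b ∉ S := hbe0 ▸ (hφspec e0 he0).2
          set θ : Sym2 (Fin n) → Fin n := fun e =>
            if h : b ∈ e then Sym2.Mem.other' h else v0 with hθ
          calc (T.filter (fun e => φ e = b)).card
              ≤ (G.neighborFinset b ∩ S).card := by
                apply Finset.card_le_card_of_injOn θ
                · intro e he
                  rw [Finset.mem_coe, Finset.mem_filter] at he
                  obtain ⟨heT, heb⟩ := he
                  have hbmem : b ∈ e := heb ▸ (hφspec e heT).1
                  rw [hθ]
                  simp only [hbmem, dif_pos]
                  have hspec := Sym2.other_spec' hbmem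
                  have heE : e ∈ G.edgeSet := by
                    rw [hT, Finset.mem_filter, mem_edgeFinset] at heT
                    exact heT.1
                  have hadj : G.Adj b (Sym2.Mem.other' hbmem) := by
                    rw [← mem_edgeSet, hspec]; exact heE
                  rw [Finset.mem_coe, Finset.mem_inter, mem_neighborFinset]
                  refine ⟨hadj, ?_⟩
                  obtain ⟨y, hy, hyS⟩ := hTin e heT
                  rw [← hspec, Sym2.mem_iff] at hy
                  rcases hy with rfl | rfl
                  · exact absurd hyS hbS
                  · exact hyS
                · intro e1 he1 e2 he2 heq
                  rw [Finset.mem_coe, Finset.mem_filter] at he1 he2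
                  have hb1 : b ∈ e1 := he1.2 ▸ (hφspec e1 he1.1).1
                  have hb2 : b ∈ e2 := he2.2 ▸ (hφspec e2 he2.1).1
                  rw [hθ] at heq
                  simp only [hb1, hb2, dif_pos] at heq
                  rw [← Sym2.other_spec' hb1, ← Sym2.other_spec' hb2, heq]
            _ ≤ 2 := htwo b
      _ ≤ 2 * (n - g) := by
          apply Nat.mul_le_mul_left
          have hsub : T.image φ ⊆ Finset.univ \ S := by
            intro b hb
            rw [Finset.mem_image] at hb
            obtain ⟨e0, he0, hbe0⟩ := hb
            rw [Finset.mem_sdiff]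
            exact ⟨Finset.mem_univ b, hbe0 ▸ (hφspec e0 he0).2⟩
          calc (T.image φ).card ≤ (Finset.univ \ S).card := Finset.card_le_card hsub
            _ = n - g := by
                rw [Finset.card_sdiff_of_subset (Finset.subset_univ S), Finset.card_univ,
                  Fintype.card_fin, hScard]
  -- outside edges
  have hout : ((G.edgeFinset.filter (fun e => ¬(∀ y ∈ e, y ∈ S))).filter
      (fun e => ∀ y ∈ e, y ∉ S)).card ≤ (n - g)^2/4 := by
    have hm := mantel_aux G htf (n - g) (Finset.univ \ S)
      (by rw [Finset.card_sdiff_of_subset (Finset.subset_univ S), Finset.card_univ,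
        Fintype.card_fin, hScard])
    refine le_trans ?_ hm
    apply Finset.card_le_card
    intro e he
    rw [Finset.mem_filter] at he
    obtain ⟨he1, he2⟩ := he
    rw [Finset.mem_filter] at he1 ⊢
    exact ⟨he1.1, fun y hy => Finset.mem_sdiff.mpr ⟨Finset.mem_univ y, he2 y hy⟩⟩
  -- put everything together
  have hsplit1 := Finset.card_filter_add_card_filter_not
    (s := G.edgeFinset) (p := fun e => ∀ y ∈ e, y ∈ S)
  have hsplit2 := Finset.card_filter_add_card_filter_not
    (s := G.edgeFinset.filter (fun e => ¬(∀ y ∈ e, y ∈ S))) (p := fun e => ∀ y ∈ e, y ∉ S)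
  have hcross' : ((G.edgeFinset.filter (fun e => ¬(∀ y ∈ e, y ∈ S))).filter
      (fun e => ¬(∀ y ∈ e, y ∉ S))).card ≤ 2 * (n - g) := by
    rw [Finset.filter_filter]
    exact hcross
  have htotal : G.edgeFinset.card ≤ g + (n-g)^2/4 + 2*(n-g) := by omega
  -- arithmetic
  suffices hfin : 4 * (g + (n-g)^2/4 + 2*(n-g)) + 13 ≤ n^2 by omega
  have hnm : n = (n - g) + g := by omega
  rw [hnm]
  set m := n - g with hmdef
  rw [Nat.add_sub_cancel]
  have hq : m^2/4*4 ≤ m^2 := Nat.div_mul_le_self _ _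
  have hexp : (m+g)^2 = m^2 + 2*(m*g) + g^2 := by ring
  have hcases : g = 5 ∨ 7 ≤ g := by omega
  rcases hcases with h5 | h7
  · have hm10 : 10 ≤ m := by omega
    rw [h5] at hexp ⊢
    linarith [hq, hexp]
  · have h8 : m * 4 ≤ m * g := Nat.mul_le_mul_left m (by omega)
    have h9 : g * 7 ≤ g * g := Nat.mul_le_mul_left g (by omega)
    have hgg : g * g = g ^ 2 := by ring
    linarith [hq, hexp, h8, h9, hgg, (by omega : 21 ≤ 3*g)]
end

lemma exists_odd_closed_walk {V : Type*} (G : SimpleGraph V)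
    (h : ¬ ∃ c : V → Bool, ∀ x y, G.Adj x y → c x ≠ c y) :
    ∃ (v : V) (w : G.Walk v v), Odd w.length := by
  by_contra hno
  push_neg at hno
  apply h
  refine ⟨fun v => decide (Odd (G.dist ((G.connectedComponentMk v).out) v)), ?_⟩
  intro x y hxy hc
  have hcomp : G.connectedComponentMk x = G.connectedComponentMk y :=
    SimpleGraph.ConnectedComponent.sound hxy.reachable
  set r := (G.connectedComponentMk x).out with hr
  have hrx : G.Reachable r x := by
    apply SimpleGraph.ConnectedComponent.exact
    exact Quot.out_eq _
  have hry : G.Reachable r y := by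
    apply SimpleGraph.ConnectedComponent.exact
    rw [hr, hcomp]; exact Quot.out_eq _
  obtain ⟨p1, hp1⟩ := hrx.exists_walk_length_eq_dist
  obtain ⟨p2, hp2⟩ := hry.exists_walk_length_eq_dist
  simp only [← hcomp] at hc
  have hcc : Odd (G.dist r x) ↔ Odd (G.dist r y) := by
    have := decide_eq_decide.mp hc
    rw [hr]; exact this
  have hparity : G.dist r x % 2 = G.dist r y % 2 := by
    rw [Nat.odd_iff, Nat.odd_iff] at hcc
    omega
  have hw : Odd ((p1.append (Walk.cons hxy p2.reverse)).length) := by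
    rw [Walk.length_append, Walk.length_cons, Walk.length_reverse, hp1, hp2, Nat.odd_iff]
    omega
  exact hno r _ hw


lemma bip_iso {n : ℕ} (cb : Fin n → Bool) (α β : ℕ)
    (hcA : Fintype.card {v : Fin n // cb v = false} = α)
    (hcB : Fintype.card {v : Fin n // ¬(cb v = false)} = β) :
    ∃ φ : Fin n ≃ (Fin α ⊕ Fin β),
      ∀ u v : Fin n,
        (completeBipartiteGraph (Fin α) (Fin β)).Adj (φ u) (φ v) ↔ cb u ≠ cb v := by
  classical
  refine ⟨(Equiv.sumCompl (fun v => cb v = false)).symm.trans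
    (Equiv.sumCongr (Fintype.equivFinOfCardEq hcA) (Fintype.equivFinOfCardEq hcB)), ?_⟩
  intro u v
  by_cases hu : cb u = false <;> by_cases hv : cb v = false <;>
    simp [completeBipartiteGraph, hu, hv]


/-- For `n ≥ 11` with `n ≡ 3 (mod 6)`, every triangle-free graph on `n` vertices with
at least `⌊n²/4⌋ - 2` edges is obtained from `K_{⌊n/2⌋,⌈n/2⌉}` by deleting at most two
edges, or is `K_{⌊n/2⌋-1,⌈n/2⌉+1}`. -/
theorem stmt6 (n : ℕ) (hn : 11 ≤ n) (hmod : n % 6 = 3)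
    (G : SimpleGraph (Fin n)) (htf : G.CliqueFree 3)
    (he : n ^ 2 / 4 - 2 ≤ edgeCount G) :
    (∃ s : Finset (Sym2 (Fin (n / 2) ⊕ Fin ((n + 1) / 2))), s.card ≤ 2 ∧
      Nonempty
        (G ≃g (completeBipartiteGraph (Fin (n / 2)) (Fin ((n + 1) / 2))).deleteEdges ↑s)) ∨
    Nonempty (G ≃g completeBipartiteGraph (Fin (n / 2 - 1)) (Fin ((n + 1) / 2 + 1))) := by
  classical
  have hn15 : 15 ≤ n := by omega
  letI : DecidableRel G.Adj := Classical.decRel _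
  have heC : edgeCount G = G.edgeFinset.card := by
    rw [edgeCount, ← SimpleGraph.coe_edgeFinset, Set.ncard_coe_finset]
  rw [heC] at he
  by_cases hbip : ∃ cb : Fin n → Bool, ∀ x y, G.Adj x y → cb x ≠ cb y
  swap
  · exfalso
    obtain ⟨v, w, hw⟩ := exists_odd_closed_walk G hbip
    have hb : 4 * G.edgeFinset.card + 13 ≤ n ^ 2 :=
      nonbip_bound G htf hn15 ⟨w.length, hw, v, w, rfl⟩
    obtain ⟨k, hk⟩ : ∃ k, n = 2*k+1 := ⟨n/2, by omega⟩
    have hs : n^2 = 4*(k*k+k)+1 := by rw [hk]; ring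
    rw [hs] at hb he
    omega
  obtain ⟨cb0, hprop0⟩ := hbip
  -- make the `false` class the small one
  obtain ⟨cb, hprop, hsmall⟩ : ∃ cb : Fin n → Bool, (∀ x y, G.Adj x y → cb x ≠ cb y) ∧
      2 * (univ.filter (fun v => cb v = false)).card < n := by
    have hsplitc := Finset.card_filter_add_card_filter_not
      (s := univ) (p := fun v : Fin n => cb0 v = false)
    rw [Finset.card_univ, Fintype.card_fin] at hsplitc
    have hcongr : univ.filter (fun v : Fin n => (!cb0 v) = false)
        = univ.filter (fun v : Fin n => ¬(cb0 v = false)) := by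
      apply Finset.filter_congr
      intro v _
      cases h : cb0 v <;> simp
    rcases Nat.lt_or_ge (2 * (univ.filter (fun v => cb0 v = false)).card) n with h | h
    · exact ⟨cb0, hprop0, h⟩
    · refine ⟨fun v => !cb0 v, fun x y hxy hcon => ?_, ?_⟩
      · exact hprop0 x y hxy (by
          cases h1 : cb0 x <;> cases h2 : cb0 y <;> simp [h1, h2] at hcon ⊢)
      · rw [hcongr]
        omega
  set A := univ.filter (fun v => cb v = false) with hA
  set B := univ.filter (fun v => cb v = true) with hB
  have haB : A.card + B.card = n := by
    have hsplitc := Finset.card_filter_add_card_filter_not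
      (s := univ) (p := fun v : Fin n => cb v = false)
    rw [Finset.card_univ, Fintype.card_fin] at hsplitc
    have hcongr : univ.filter (fun v : Fin n => ¬(cb v = false))
        = univ.filter (fun v : Fin n => cb v = true) := by
      apply Finset.filter_congr
      intro v _
      cases h : cb v <;> simp
    rw [hA, hB, ← hcongr]
    exact hsplitc
  set Cross := (A ×ˢ B).image (fun p : Fin n × Fin n => s(p.1, p.2)) with hCross
  have hmemA : ∀ v, v ∈ A ↔ cb v = false := by intro v; rw [hA]; simp
  have hmemB : ∀ v, v ∈ B ↔ cb v = true := by intro v; rw [hB]; simp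
  have hCrossIff : ∀ u v : Fin n, s(u, v) ∈ Cross ↔ cb u ≠ cb v := by
    intro u v
    constructor
    · intro h
      rw [hCross, Finset.mem_image] at h
      obtain ⟨⟨x, y⟩, hxy, heq⟩ := h
      rw [Finset.mem_product] at hxy
      have hx : cb x = false := (hmemA x).mp hxy.1
      have hy : cb y = true := (hmemB y).mp hxy.2
      rcases Sym2.eq_iff.mp heq with ⟨rfl, rfl⟩ | ⟨rfl, rfl⟩ <;> simp [hx, hy]
    · intro hne
      rw [hCross, Finset.mem_image]
      cases hcu : cb u
      · have hcv : cb v = true := by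
          cases hcv' : cb v
          · rw [hcu, hcv'] at hne; exact absurd rfl hne
          · rfl
        exact ⟨(u, v), Finset.mem_product.mpr ⟨(hmemA u).mpr hcu, (hmemB v).mpr hcv⟩, rfl⟩
      · have hcv : cb v = false := by
          cases hcv' : cb v
          · rfl
          · rw [hcu, hcv'] at hne; exact absurd rfl hne
        exact ⟨(v, u), Finset.mem_product.mpr ⟨(hmemA v).mpr hcv, (hmemB u).mpr hcu⟩,
          Sym2.eq_swap⟩
  have hEsub : G.edgeFinset ⊆ Cross := by
    intro e he'
    rw [mem_edgeFinset] at he'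
    induction e using Sym2.ind with
    | _ x y =>
      rw [mem_edgeSet] at he'
      exact (hCrossIff x y).mpr (hprop x y he')
  have hEc : G.edgeFinset.card ≤ Cross.card := Finset.card_le_card hEsub
  have hCrossCard : Cross.card = A.card * B.card := by
    rw [hCross, Finset.card_image_of_injOn, Finset.card_product]
    intro p hp q hq heq
    simp only [Finset.coe_product, Set.mem_prod, Finset.mem_coe] at hp hq
    simp only at heq
    rcases Sym2.eq_iff.mp heq with ⟨h1, h2⟩ | ⟨h1, h2⟩
    · exact Prod.ext h1 h2
    · exfalso
      have := (hmemA p.1).mp hp.1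
      have := (hmemB q.2).mp hq.2
      rw [← h1] at this
      simp_all
  -- generalize the cardinalities to plain naturals
  obtain ⟨a, ha⟩ : ∃ x, A.card = x := ⟨_, rfl⟩
  obtain ⟨b, hb⟩ : ∃ x, B.card = x := ⟨_, rfl⟩
  rw [ha] at hsmall
  rw [ha, hb] at haB hCrossCard
  -- find d
  have hd : n - 2*a = 1 ∨ n - 2*a = 3 := by
    obtain ⟨d, hddef⟩ : ∃ x, n - 2*a = x := ⟨_, rfl⟩
    have hnd : n = 2*a + d := by omega
    have hX : n^2 = 4*(a*(a+d)) + d*d := by rw [hnd]; ring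
    have hb' : b = a + d := by omega
    have hcc : Cross.card = a*(a+d) := by rw [hCrossCard, hb']
    have hE1 : n^2/4 - 2 ≤ a*(a+d) := le_trans he (hcc ▸ hEc)
    rw [hX, Nat.mul_add_div (by norm_num)] at hE1
    obtain ⟨X, hXdef⟩ : ∃ X, a*(a+d) = X := ⟨_, rfl⟩
    rw [hXdef] at hE1
    have hdd : d * d ≤ 11 := by
      by_contra hcon
      push_neg at hcon
      omega
    have hd3 : d ≤ 3 := by
      by_contra hcon
      push_neg at hcon
      have h16 : 4*4 ≤ d*d := Nat.mul_le_mul hcon hcon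
      omega
    omega
  set missing := Cross \ G.edgeFinset with hmiss
  have hmisscard : missing.card = Cross.card - G.edgeFinset.card :=
    Finset.card_sdiff_of_subset hEsub
  rcases hd with hd1 | hd3
  · -- d = 1 : K_{n/2, (n+1)/2} minus ≤ 2 edges
    left
    have hcA : Fintype.card {v : Fin n // cb v = false} = n/2 := by
      rw [Fintype.card_subtype]
      rw [show univ.filter (fun v : Fin n => cb v = false) = A from rfl, ha]
      omega
    have hcB : Fintype.card {v : Fin n // ¬(cb v = false)} = (n+1)/2 := by
      rw [Fintype.card_subtype]
      have hcongr : univ.filter (fun v : Fin n => ¬(cb v = false))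
          = univ.filter (fun v : Fin n => cb v = true) := by
        apply Finset.filter_congr
        intro v _
        cases h : cb v <;> simp
      rw [hcongr, show univ.filter (fun v : Fin n => cb v = true) = B from rfl, hb]
      omega
    obtain ⟨φ, hφ⟩ := bip_iso cb (n/2) ((n+1)/2) hcA hcB
    refine ⟨missing.image (Sym2.map φ), ?_, ⟨⟨φ, ?_⟩⟩⟩
    · -- card ≤ 2
      refine le_trans Finset.card_image_le ?_
      have hcc : Cross.card = a * b := hCrossCard
      have hX : n^2 = 4*(a*b) + 1 := by
        have hn' : n = 2*a + 1 := by omega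
        have hb' : b = a + 1 := by omega
        rw [hn', hb']; ring
      obtain ⟨X, hXdef⟩ : ∃ X, a*b = X := ⟨_, rfl⟩
      rw [hXdef] at hX hcc
      rw [hX] at he
      omega
    · -- iso property
      intro u v
      rw [deleteEdges_adj, hφ]
      constructor
      · rintro ⟨hne, hnotin⟩
        by_contra hna
        have hcr : s(u, v) ∈ Cross := (hCrossIff u v).mpr hne
        have hm : s(u, v) ∈ missing := by
          rw [hmiss, Finset.mem_sdiff]
          refine ⟨hcr, fun hc => hna ?_⟩
          rwa [mem_edgeFinset, mem_edgeSet] at hc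
        apply hnotin
        rw [Finset.mem_coe, Finset.mem_image]
        exact ⟨s(u, v), hm, Sym2.map_pair_eq φ u v⟩
      · intro hadj
        refine ⟨hprop u v hadj, ?_⟩
        intro hin
        rw [Finset.mem_coe, Finset.mem_image] at hin
        obtain ⟨e', he', heq⟩ := hin
        rw [← Sym2.map_pair_eq φ u v] at heq
        have : e' = s(u, v) := Sym2.map.injective φ.injective heq
        rw [this, hmiss, Finset.mem_sdiff] at he'
        apply he'.2
        rw [mem_edgeFinset, mem_edgeSet]
        exact hadj
  · -- d = 3 : exactly K_{n/2-1, (n+1)/2+1}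
    right
    have hcA : Fintype.card {v : Fin n // cb v = false} = n/2 - 1 := by
      rw [Fintype.card_subtype]
      rw [show univ.filter (fun v : Fin n => cb v = false) = A from rfl, ha]
      omega
    have hcB : Fintype.card {v : Fin n // ¬(cb v = false)} = (n+1)/2 + 1 := by
      rw [Fintype.card_subtype]
      have hcongr : univ.filter (fun v : Fin n => ¬(cb v = false))
          = univ.filter (fun v : Fin n => cb v = true) := by
        apply Finset.filter_congr
        intro v _
        cases h : cb v <;> simp
      rw [hcongr, show univ.filter (fun v : Fin n => cb v = true) = B from rfl, hb]
      omega
    obtain ⟨φ, hφ⟩ := bip_iso cb (n/2 - 1) ((n+1)/2 + 1) hcA hcB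
    -- G.edgeFinset = Cross
    have hEeq : G.edgeFinset = Cross := by
      apply Finset.eq_of_subset_of_card_le hEsub
      have hX : n^2 = 4*(a*b) + 9 := by
        have hn' : n = 2*a + 3 := by omega
        have hb' : b = a + 3 := by omega
        rw [hn', hb']; ring
      obtain ⟨X, hXdef⟩ : ∃ X, a*b = X := ⟨_, rfl⟩
      rw [hXdef] at hX
      rw [hCrossCard, hXdef]
      rw [hX] at he
      omega
    refine ⟨⟨φ, ?_⟩⟩
    intro u v
    rw [hφ]
    constructor
    · intro hne
      have : s(u, v) ∈ Cross := (hCrossIff u v).mpr hne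
      rw [← hEeq, mem_edgeFinset, mem_edgeSet] at this
      exact this
    · intro hadj
      exact hprop u v hadj
end

section
/- Let X and Y be disjoint finite vertex sets with |X| ≥ 5 and |Y| ≥ 5, and let H be a P_6^2-free graph on vertex set X ∪ Y such that all but at most two of the pairs {x, y} with x ∈ X and y ∈ Y are edges of H. If the induced subgraph H[X] contains a triangle, then Y is an independent set in H. -/
open SimpleGraph

-- auxiliary lemma
set_option maxHeartbeats 1000000 in
lemma build_emb {V : Type*} (G : SimpleGraph V) (v0 v1 v2 v3 v4 v5 : V)
    (h01 : G.Adj v0 v1) (h02 : G.Adj v0 v2) (h12 : G.Adj v1 v2)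
    (h13 : G.Adj v1 v3) (h23 : G.Adj v2 v3) (h24 : G.Adj v2 v4)
    (h34 : G.Adj v3 v4) (h35 : G.Adj v3 v5) (h45 : G.Adj v4 v5)
    (d03 : v0 ≠ v3) (d04 : v0 ≠ v4) (d05 : v0 ≠ v5)
    (d14 : v1 ≠ v4) (d15 : v1 ≠ v5) (d25 : v2 ≠ v5) :
    ∃ f : Fin 6 → V, Function.Injective f ∧
      ∀ i j : Fin 6, (i : ℕ) < (j : ℕ) → (j : ℕ) ≤ (i : ℕ) + 2 → G.Adj (f i) (f j) := by
  have d01 := h01.ne; have d02 := h02.ne; have d12 := h12.ne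
  have d13 := h13.ne; have d23 := h23.ne; have d24 := h24.ne
  have d34 := h34.ne; have d35 := h35.ne; have d45 := h45.ne
  refine ⟨fun i => match i with
    | 0 => v0 | 1 => v1 | 2 => v2 | 3 => v3 | 4 => v4 | 5 => v5, ?_, ?_⟩
  · intro i j hij
    fin_cases i <;> fin_cases j <;> simp only at hij ⊢ <;> simp_all
  · intro i j hlt hle
    fin_cases i <;> fin_cases j <;> simp_all

/-- If `H` is `P_6^2`-free on vertex set `X ∪ Y` (disjoint parts of size `≥ 5`), all but
at most two cross pairs are edges, and `H[X]` contains a triangle, then `Y` is an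
independent set in `H`. -/
theorem stmt8 {V : Type*} [Fintype V] [DecidableEq V] (H : SimpleGraph V)
    (X Y : Finset V) (hdisj : Disjoint X Y) (hcover : X ∪ Y = Finset.univ)
    (hX : 5 ≤ X.card) (hY : 5 ≤ Y.card) (hfree : P6SqFree H)
    (hmiss : {p : V × V | p.1 ∈ X ∧ p.2 ∈ Y ∧ ¬ H.Adj p.1 p.2}.ncard ≤ 2)
    (htri : ∃ a b c : V, a ∈ X ∧ b ∈ X ∧ c ∈ X ∧ H.Adj a b ∧ H.Adj b c ∧ H.Adj a c) :
    ∀ y₁ ∈ Y, ∀ y₂ ∈ Y, ¬ H.Adj y₁ y₂ := by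
  intro y₁ hy₁ y₂ hy₂ hadj
  obtain ⟨a, b, c, haX, hbX, hcX, hab, hbc, hac⟩ := htri
  set M : Set (V × V) := {p : V × V | p.1 ∈ X ∧ p.2 ∈ Y ∧ ¬ H.Adj p.1 p.2} with hM
  have hMfin : M.Finite := Set.toFinite M
  have hMcard : hMfin.toFinset.card ≤ 2 := by
    rwa [Set.ncard_eq_toFinset_card M hMfin] at hmiss
  -- cross adjacency from non-membership in M
  have cross : ∀ x y, x ∈ X → y ∈ Y → (x, y) ∉ hMfin.toFinset → H.Adj x y := by
    intro x y hx hy hxy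
    by_contra hn
    exact hxy (by simp [Set.Finite.mem_toFinset, hM, hx, hy, hn])
  have hXY : ∀ x ∈ X, ∀ y ∈ Y, x ≠ y := by
    intro x hx y hy h
    exact (Finset.disjoint_left.mp hdisj hx (h ▸ hy))
  -- pick y₃
  have hy12 : y₁ ≠ y₂ := hadj.ne
  obtain ⟨y₃, hy₃S, hy₃im⟩ :
      ∃ y₃ ∈ (Y.erase y₁).erase y₂, y₃ ∉ hMfin.toFinset.image Prod.snd := by
    have h1 := Finset.pred_card_le_card_erase (s := Y) (a := y₁)
    have h2 := Finset.pred_card_le_card_erase (s := Y.erase y₁) (a := y₂)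
    have h3 := Finset.card_image_le (s := hMfin.toFinset) (f := Prod.snd)
    exact Finset.not_subset.mp fun hsub => absurd (Finset.card_le_card hsub) (by omega)
  have hy₃Y : y₃ ∈ Y := Finset.mem_of_mem_erase (Finset.mem_of_mem_erase hy₃S)
  have hy₃1 : y₃ ≠ y₁ := Finset.ne_of_mem_erase (Finset.mem_of_mem_erase hy₃S)
  have hy₃2 : y₃ ≠ y₂ := Finset.ne_of_mem_erase hy₃S
  have hy₃adj : ∀ x ∈ X, H.Adj x y₃ := by
    intro x hx
    refine cross x y₃ hx hy₃Y fun hmem => hy₃im ?_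
    exact Finset.mem_image.mpr ⟨(x, y₃), hmem, rfl⟩
  -- triangle vertex set
  have hane : a ≠ b := hab.ne
  have hane2 : a ≠ c := hac.ne
  have hbne : b ≠ c := hbc.ne
  set T : Finset V := {a, b, c} with hT
  have hTcard : T.card = 3 := by
    rw [hT, Finset.card_insert_of_notMem (by simp [hane, hane2]),
      Finset.card_insert_of_notMem (by simp [hbne]), Finset.card_singleton]
  have hTX : ∀ x ∈ T, x ∈ X := by
    intro x hx
    rcases Finset.mem_insert.mp hx with h | hx
    · exact h ▸ haX
    rcases Finset.mem_insert.mp hx with h | hx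
    · exact h ▸ hbX
    · exact (Finset.mem_singleton.mp hx) ▸ hcX
  have hTadj : ∀ u ∈ T, ∀ v ∈ T, u ≠ v → H.Adj u v := by
    intro u hu v hv huv
    simp only [hT, Finset.mem_insert, Finset.mem_singleton] at hu hv
    rcases hu with rfl | rfl | rfl <;> rcases hv with rfl | rfl | rfl <;>
      first | exact absurd rfl huv | assumption | exact hab.symm | exact hbc.symm | exact hac.symm
  -- pick c₀ adjacent to both y₁ y₂
  obtain ⟨c₀, hc₀T, hc₀im⟩ :
      ∃ c₀ ∈ T, c₀ ∉ hMfin.toFinset.image Prod.fst := by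
    have h3 := Finset.card_image_le (s := hMfin.toFinset) (f := Prod.fst)
    exact Finset.not_subset.mp fun hsub => absurd (Finset.card_le_card hsub) (by omega)
  have hc₀X : c₀ ∈ X := hTX _ hc₀T
  have hc₀ : ∀ y ∈ Y, H.Adj c₀ y := by
    intro y hy
    refine cross c₀ y hc₀X hy fun hmem => hc₀im ?_
    exact Finset.mem_image.mpr ⟨(c₀, y), hmem, rfl⟩
  -- pick b₀ adjacent to y₁ or y₂
  obtain ⟨b₀, hb₀T', hb₀adj⟩ :
      ∃ b₀ ∈ T.erase c₀, H.Adj b₀ y₁ ∨ H.Adj b₀ y₂ := by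
    by_contra hcon
    push_neg at hcon
    have hsub : (T.erase c₀) ×ˢ ({y₁, y₂} : Finset V) ⊆ hMfin.toFinset := by
      intro p hp
      obtain ⟨hp1, hp2⟩ := Finset.mem_product.mp hp
      have hpX : p.1 ∈ X := hTX _ (Finset.mem_of_mem_erase hp1)
      have hcon' := hcon p.1 hp1
      rcases Finset.mem_insert.mp hp2 with h | h
      · simp [Set.Finite.mem_toFinset, hM, hpX, h, hy₁, hcon'.1]
      · have h := Finset.mem_singleton.mp h
        simp [Set.Finite.mem_toFinset, hM, hpX, h, hy₂, hcon'.2]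
    have hc1 : (T.erase c₀).card = 2 := by
      rw [Finset.card_erase_of_mem hc₀T, hTcard]
    have hc2 : ({y₁, y₂} : Finset V).card = 2 := by
      rw [Finset.card_insert_of_notMem (by simp [hy12]), Finset.card_singleton]
    have := Finset.card_le_card hsub
    rw [Finset.card_product, hc1, hc2] at this
    omega
  have hb₀X : b₀ ∈ X := hTX _ (Finset.mem_of_mem_erase hb₀T')
  have hb₀c₀ : b₀ ≠ c₀ := Finset.ne_of_mem_erase hb₀T'
  -- pick a₀ the remaining vertex
  obtain ⟨a₀, ha₀T'⟩ : ∃ a₀, a₀ ∈ (T.erase c₀).erase b₀ := by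
    apply Finset.card_pos.mp
    rw [Finset.card_erase_of_mem hb₀T', Finset.card_erase_of_mem hc₀T, hTcard]
    omega
  have ha₀b₀ : a₀ ≠ b₀ := Finset.ne_of_mem_erase ha₀T'
  have ha₀c₀ : a₀ ≠ c₀ := Finset.ne_of_mem_erase (Finset.mem_of_mem_erase ha₀T')
  have ha₀T : a₀ ∈ T := Finset.mem_of_mem_erase (Finset.mem_of_mem_erase ha₀T')
  have hb₀T : b₀ ∈ T := Finset.mem_of_mem_erase hb₀T'
  have ha₀X : a₀ ∈ X := hTX _ ha₀T
  -- triangle adjacencies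
  have hA : H.Adj a₀ b₀ := hTadj _ ha₀T _ hb₀T ha₀b₀
  have hB : H.Adj a₀ c₀ := hTadj _ ha₀T _ hc₀T ha₀c₀
  have hC : H.Adj b₀ c₀ := hTadj _ hb₀T _ hc₀T hb₀c₀
  -- build the embedding: (y₃, a₀, b₀, c₀, yᵢ, yⱼ)
  apply hfree
  rcases hb₀adj with hb1 | hb2
  · exact build_emb H y₃ a₀ b₀ c₀ y₁ y₂
      (hy₃adj a₀ ha₀X).symm (hy₃adj b₀ hb₀X).symm hA hB hC hb1
      (hc₀ y₁ hy₁) (hc₀ y₂ hy₂) hadj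
      (fun h => hXY c₀ hc₀X y₃ hy₃Y h.symm) hy₃1 hy₃2
      (hXY a₀ ha₀X y₁ hy₁) (hXY a₀ ha₀X y₂ hy₂) (hXY b₀ hb₀X y₂ hy₂)
  · exact build_emb H y₃ a₀ b₀ c₀ y₂ y₁
      (hy₃adj a₀ ha₀X).symm (hy₃adj b₀ hb₀X).symm hA hB hC hb2
      (hc₀ y₂ hy₂) (hc₀ y₁ hy₁) hadj.symm
      (fun h => hXY c₀ hc₀X y₃ hy₃Y h.symm) hy₃2 hy₃1
      (hXY a₀ ha₀X y₂ hy₂) (hXY a₀ ha₀X y₁ hy₁) (hXY b₀ hb₀X y₁ hy₁)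
end

section
/- Let X and Y be disjoint finite vertex sets with |X| ≥ 5 and |Y| ≥ 5, and let H be a P_6^2-free graph on vertex set X ∪ Y such that all but at most two of the pairs {x, y} with x ∈ X and y ∈ Y are edges of H. If the induced subgraph H[X] contains a triangle, then the number of triangles of H satisfies t(H) ≤ |X|·|Y| + ⌊|X|/3⌋. -/
open SimpleGraph

section AuxStmt9

open Finset

variable {V : Type*} [Fintype V] [DecidableEq V]

omit [Fintype V] in
lemma stmt9_build (H : SimpleGraph V) (hfree : P6SqFree H) (a b c d e g : V)
    (d01 : a ≠ b) (d02 : a ≠ c) (d03 : a ≠ d) (d04 : a ≠ e) (d05 : a ≠ g)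
    (d12 : b ≠ c) (d13 : b ≠ d) (d14 : b ≠ e) (d15 : b ≠ g)
    (d23 : c ≠ d) (d24 : c ≠ e) (d25 : c ≠ g)
    (d34 : d ≠ e) (d35 : d ≠ g) (d45 : e ≠ g)
    (h01 : H.Adj a b) (h02 : H.Adj a c) (h12 : H.Adj b c) (h13 : H.Adj b d)
    (h23 : H.Adj c d) (h24 : H.Adj c e) (h34 : H.Adj d e) (h35 : H.Adj d g)
    (h45 : H.Adj e g) : False := by
  apply hfree
  refine ⟨fun i => match i with
    | 0 => a | 1 => b | 2 => c | 3 => d | 4 => e | 5 => g, ?_, ?_⟩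
  · intro i j h
    fin_cases i <;> fin_cases j <;> simp_all
  · intro i j h1 h2
    fin_cases i <;> fin_cases j <;> simp_all

lemma stmt9_ec_erase (H : SimpleGraph V) [DecidableRel H.Adj] (S : Finset V) (v : V)
    (hv : v ∈ S) :
    ((S.powersetCard 2).filter (fun e => ∃ a ∈ e, ∃ b ∈ e, H.Adj a b)).card
      = (((S.erase v).powersetCard 2).filter (fun e => ∃ a ∈ e, ∃ b ∈ e, H.Adj a b)).card
        + ((S.erase v).filter (fun w => H.Adj v w)).card := by
  set A := (S.powersetCard 2).filter (fun e => ∃ a ∈ e, ∃ b ∈ e, H.Adj a b) with hA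
  have h1 : A.filter (fun e => ¬ v ∈ e)
      = ((S.erase v).powersetCard 2).filter (fun e => ∃ a ∈ e, ∃ b ∈ e, H.Adj a b) := by
    ext e
    simp only [hA, Finset.mem_filter, Finset.mem_powersetCard, Finset.subset_erase]
    tauto
  have h2 : (A.filter (fun e => v ∈ e)).card
      = ((S.erase v).filter (fun w => H.Adj v w)).card := by
    symm
    apply Finset.card_bij (fun w _ => insert v {w})
    · intro w hw
      simp only [Finset.mem_filter, Finset.mem_erase] at hw
      obtain ⟨⟨hwv, hwS⟩, hadj⟩ := hw
      simp only [hA, Finset.mem_filter, Finset.mem_powersetCard]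
      refine ⟨⟨⟨?_, ?_⟩, v, ?_, w, ?_, hadj⟩, ?_⟩
      · intro z hz
        simp only [Finset.mem_insert, Finset.mem_singleton] at hz
        rcases hz with rfl | rfl
        · exact hv
        · exact hwS
      · rw [Finset.card_insert_of_notMem (by simp [Ne.symm hwv]), Finset.card_singleton]
      · simp
      · simp
      · simp
    · intro w1 hw1 w2 hw2 heq
      have : w1 ∈ insert v ({w2} : Finset V) := by
        rw [← heq]; simp
      simp only [Finset.mem_insert, Finset.mem_singleton] at this
      rcases this with rfl | rfl
      · exact absurd rfl (Finset.mem_erase.mp (Finset.mem_filter.mp hw1).1).1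
      · rfl
    · intro e he
      simp only [hA, Finset.mem_filter, Finset.mem_powersetCard] at he
      obtain ⟨⟨⟨heS, hcard⟩, a, ha, b, hb, hab⟩, hve⟩ := he
      obtain ⟨x, y, hxy, hexy⟩ := Finset.card_eq_two.mp hcard
      have hvxy : v = x ∨ v = y := by
        rw [hexy] at hve; simpa using hve
      obtain ⟨w, hwne, hew⟩ : ∃ w, w ≠ v ∧ e = insert v {w} := by
        rcases hvxy with rfl | rfl
        · exact ⟨y, fun h => hxy h.symm, by rw [hexy]⟩
        · exact ⟨x, fun h => hxy h, by rw [hexy]; ext z; simp; tauto⟩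
      refine ⟨w, ?_, hew.symm⟩
      simp only [Finset.mem_filter, Finset.mem_erase]
      have hwS : w ∈ S := heS (by rw [hew]; simp)
      refine ⟨⟨hwne, hwS⟩, ?_⟩
      rw [hew] at ha hb
      simp only [Finset.mem_insert, Finset.mem_singleton] at ha hb
      rcases ha with rfl | rfl <;> rcases hb with rfl | rfl
      · exact absurd rfl hab.ne
      · exact hab
      · exact hab.symm
      · exact absurd rfl hab.ne
  have hsplit' : (A.filter (fun e => v ∈ e)).card + (A.filter (fun e => ¬ v ∈ e)).card
      = A.card := Finset.card_filter_add_card_filter_not _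
  rw [h1, h2] at hsplit'
  omega

lemma stmt9_ec_le (H : SimpleGraph V) [DecidableRel H.Adj] (X : Finset V)
    (noP4 : ∀ p q r s : V, p ∈ X → q ∈ X → r ∈ X → s ∈ X → p ≠ q → p ≠ r → p ≠ s →
      q ≠ r → q ≠ s → r ≠ s → H.Adj p q → H.Adj q r → H.Adj r s → False) :
    ∀ S : Finset V, S ⊆ X →
      ((S.powersetCard 2).filter (fun e => ∃ a ∈ e, ∃ b ∈ e, H.Adj a b)).card ≤ S.card := by
  intro S
  induction S using Finset.strongInduction with
  | _ S ih =>
    intro hSX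
    by_cases htr : ∃ u ∈ S, ∃ v ∈ S, ∃ w ∈ S, u ≠ v ∧ u ≠ w ∧ v ≠ w ∧
        H.Adj u v ∧ H.Adj u w ∧ H.Adj v w
    · obtain ⟨u, hu, v, hv, w, hw, nuv, nuw, nvw, auv, auw, avw⟩ := htr
      have hnu : (S.erase u).filter (fun x => H.Adj u x) = {v, w} := by
        ext x
        simp only [Finset.mem_filter, Finset.mem_erase, Finset.mem_insert, Finset.mem_singleton]
        constructor
        · rintro ⟨⟨hxu, hxS⟩, hadj⟩
          by_contra hx
          push_neg at hx
          exact noP4 x u v w (hSX hxS) (hSX hu) (hSX hv) (hSX hw)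
            hxu hx.1 hx.2 nuv nuw nvw hadj.symm auv avw
        · rintro (rfl | rfl)
          · exact ⟨⟨Ne.symm nuv, hv⟩, auv⟩
          · exact ⟨⟨Ne.symm nuw, hw⟩, auw⟩
      have hnv : ((S.erase u).erase v).filter (fun x => H.Adj v x) = {w} := by
        ext x
        simp only [Finset.mem_filter, Finset.mem_erase, Finset.mem_singleton]
        constructor
        · rintro ⟨⟨hxv, hxu, hxS⟩, hadj⟩
          by_contra hx
          exact noP4 x v u w (hSX hxS) (hSX hv) (hSX hu) (hSX hw)
            hxv hxu hx nuv.symm nvw nuw hadj.symm auv.symm auw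
        · rintro rfl
          exact ⟨⟨Ne.symm nvw, Ne.symm nuw, hw⟩, avw⟩
      have hnw : (((S.erase u).erase v).erase w).filter (fun x => H.Adj w x) = ∅ := by
        ext x
        simp only [Finset.mem_filter, Finset.mem_erase, Finset.notMem_empty, iff_false,
          not_and]
        rintro ⟨hxw, hxv, hxu, hxS⟩ hadj
        exact noP4 x w u v (hSX hxS) (hSX hw) (hSX hu) (hSX hv)
          hxw hxu hxv nuw.symm nvw.symm nuv hadj.symm auw.symm auv
      have e1 := stmt9_ec_erase H S u hu
      have e2 := stmt9_ec_erase H (S.erase u) v (Finset.mem_erase.mpr ⟨Ne.symm nuv, hv⟩)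
      have e3 := stmt9_ec_erase H ((S.erase u).erase v) w
        (Finset.mem_erase.mpr ⟨Ne.symm nvw, Finset.mem_erase.mpr ⟨Ne.symm nuw, hw⟩⟩)
      rw [hnu, hnv, hnw] at *
      have hsub : (((S.erase u).erase v).erase w) ⊂ S :=
        Finset.ssubset_of_subset_of_ssubset
          ((Finset.erase_subset _ _).trans (Finset.erase_subset _ _))
          (Finset.erase_ssubset hu)
      have hih := ih _ hsub (Finset.Subset.trans hsub.subset hSX)
      have hc1 : (S.erase u).card = S.card - 1 := Finset.card_erase_of_mem hu
      have hc2 : ((S.erase u).erase v).card = (S.erase u).card - 1 :=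
        Finset.card_erase_of_mem (Finset.mem_erase.mpr ⟨Ne.symm nuv, hv⟩)
      have hc3 : (((S.erase u).erase v).erase w).card = ((S.erase u).erase v).card - 1 :=
        Finset.card_erase_of_mem
          (Finset.mem_erase.mpr ⟨Ne.symm nvw, Finset.mem_erase.mpr ⟨Ne.symm nuw, hw⟩⟩)
      have hvw : ({v, w} : Finset V).card = 2 := by
        rw [Finset.card_insert_of_notMem (by simp [nvw]), Finset.card_singleton]
      have hw1 : ({w} : Finset V).card = 1 := Finset.card_singleton w
      have hwe : (∅ : Finset V).card = 0 := Finset.card_empty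
      have hScard : 1 ≤ S.card := Finset.card_pos.mpr ⟨u, hu⟩
      have hS2 : 1 ≤ (S.erase u).card := Finset.card_pos.mpr
        ⟨v, Finset.mem_erase.mpr ⟨Ne.symm nuv, hv⟩⟩
      have hS3 : 1 ≤ ((S.erase u).erase v).card := Finset.card_pos.mpr
        ⟨w, Finset.mem_erase.mpr ⟨Ne.symm nvw, Finset.mem_erase.mpr ⟨Ne.symm nuw, hw⟩⟩⟩
      rw [hvw] at e1
      rw [hw1] at e2
      rw [hwe] at e3
      omega
    · by_cases hdeg : ∃ v ∈ S, ((S.erase v).filter (fun w => H.Adj v w)).card ≤ 1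
      · obtain ⟨v, hv, hd⟩ := hdeg
        have e1 := stmt9_ec_erase H S v hv
        have hih := ih _ (Finset.erase_ssubset hv)
          ((Finset.erase_subset _ _).trans hSX)
        have hc1 : (S.erase v).card = S.card - 1 := Finset.card_erase_of_mem hv
        have hScard : 1 ≤ S.card := Finset.card_pos.mpr ⟨v, hv⟩
        omega
      · push_neg at hdeg
        rcases Finset.eq_empty_or_nonempty S with rfl | ⟨v0, hv0⟩
        · rw [Finset.powersetCard_eq_empty.mpr (by simp), Finset.filter_empty]
          simp
        · exfalso
          have h0 := hdeg v0 hv0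
          obtain ⟨u1, hu1⟩ := Finset.card_pos.mp (by omega :
            0 < ((S.erase v0).filter (fun w => H.Adj v0 w)).card)
          simp only [Finset.mem_filter, Finset.mem_erase] at hu1
          obtain ⟨⟨hu1v0, hu1S⟩, hadj01⟩ := hu1
          obtain ⟨u2, hu2, hu2v0⟩ := Finset.exists_mem_ne
            (s := (S.erase u1).filter (fun w => H.Adj u1 w)) (hdeg u1 hu1S) v0
          simp only [Finset.mem_filter, Finset.mem_erase] at hu2
          obtain ⟨⟨hu2u1, hu2S⟩, hadj12⟩ := hu2
          have hnadj02 : ¬ H.Adj v0 u2 := by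
            intro h
            exact htr ⟨v0, hv0, u1, hu1S, u2, hu2S, Ne.symm hu1v0, Ne.symm hu2v0,
              Ne.symm hu2u1, hadj01, h, hadj12⟩
          obtain ⟨u3, hu3, hu3u1⟩ := Finset.exists_mem_ne
            (s := (S.erase u2).filter (fun w => H.Adj u2 w)) (hdeg u2 hu2S) u1
          simp only [Finset.mem_filter, Finset.mem_erase] at hu3
          obtain ⟨⟨hu3u2, hu3S⟩, hadj23⟩ := hu3
          have hu3v0 : u3 ≠ v0 := by
            rintro rfl
            exact hnadj02 hadj23.symm
          exact noP4 v0 u1 u2 u3 (hSX hv0) (hSX hu1S) (hSX hu2S) (hSX hu3S)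
            (Ne.symm hu1v0) (Ne.symm hu2v0) (Ne.symm hu3v0) (Ne.symm hu2u1)
            (Ne.symm hu3u1) (Ne.symm hu3u2) hadj01 hadj12 hadj23

end AuxStmt9


/-- If `H` is `P_6^2`-free on vertex set `X ∪ Y` (disjoint parts of size `≥ 5`), all but
at most two cross pairs are edges, and `H[X]` contains a triangle, then
`t(H) ≤ |X|·|Y| + ⌊|X|/3⌋`. -/
theorem stmt9 {V : Type*} [Fintype V] [DecidableEq V] (H : SimpleGraph V)
    (X Y : Finset V) (hdisj : Disjoint X Y) (hcover : X ∪ Y = Finset.univ)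
    (hX : 5 ≤ X.card) (hY : 5 ≤ Y.card) (hfree : P6SqFree H)
    (hmiss : {p : V × V | p.1 ∈ X ∧ p.2 ∈ Y ∧ ¬ H.Adj p.1 p.2}.ncard ≤ 2)
    (htri : ∃ a b c : V, a ∈ X ∧ b ∈ X ∧ c ∈ X ∧ H.Adj a b ∧ H.Adj b c ∧ H.Adj a c) :
    triCount H ≤ X.card * Y.card + X.card / 3 := by
  letI : DecidableRel H.Adj := Classical.decRel _
  classical
  obtain ⟨a, b, c, haX, hbX, hcX, hab, hbc, hac⟩ := htri
  have hMfin : {p : V × V | p.1 ∈ X ∧ p.2 ∈ Y ∧ ¬ H.Adj p.1 p.2}.Finite := Set.toFinite _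
  set Mf := hMfin.toFinset with hMf
  have hMcard : Mf.card ≤ 2 := by
    rw [hMf, ← Set.ncard_eq_toFinset_card _ hMfin]
    exact hmiss
  have hadjM : ∀ x ∈ X, ∀ y ∈ Y, (x, y) ∉ Mf → H.Adj x y := by
    intro x hx y hy hn
    by_contra hne
    exact hn (by rw [hMf, Set.Finite.mem_toFinset]; exact ⟨hx, hy, hne⟩)
  have not3 : ∀ e1 e2 e3 : V × V, e1 ∈ Mf → e2 ∈ Mf → e3 ∈ Mf →
      e1 ≠ e2 → e1 ≠ e3 → e2 ≠ e3 → False := by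
    intro e1 e2 e3 h1 h2 h3 n12 n13 n23
    have hsub : ({e1, e2, e3} : Finset (V × V)) ⊆ Mf := by
      intro x hx
      simp only [Finset.mem_insert, Finset.mem_singleton] at hx
      rcases hx with rfl | rfl | rfl <;> assumption
    have hc : ({e1, e2, e3} : Finset (V × V)).card = 3 := by
      rw [Finset.card_insert_of_notMem (by simp [n12, n13]),
        Finset.card_insert_of_notMem (by simp [n23]), Finset.card_singleton]
    have := Finset.card_le_card hsub
    omega
  have neXY : ∀ x ∈ X, ∀ y ∈ Y, x ≠ y := by
    rintro x hx y hy rfl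
    exact Finset.disjoint_left.mp hdisj hx hy
  set Yg := Y \ Mf.image Prod.snd with hYg
  have hYgY : Yg ⊆ Y := Finset.sdiff_subset
  have hYgood : ∀ y ∈ Yg, ∀ x ∈ X, H.Adj x y := by
    intro y hy x hx
    apply hadjM x hx y (hYgY hy)
    intro hmem
    exact (Finset.mem_sdiff.mp hy).2 (Finset.mem_image.mpr ⟨(x, y), hmem, rfl⟩)
  have hYgcard : 3 ≤ Yg.card := by
    have h1 : Y.card ≤ Yg.card + (Mf.image Prod.snd).card :=
      Finset.card_le_card_sdiff_add_card
    have h2 : (Mf.image Prod.snd).card ≤ Mf.card := Finset.card_image_le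
    omega
  have noP4 : ∀ p q r s : V, p ∈ X → q ∈ X → r ∈ X → s ∈ X → p ≠ q → p ≠ r → p ≠ s →
      q ≠ r → q ≠ s → r ≠ s → H.Adj p q → H.Adj q r → H.Adj r s → False := by
    intro p q r s hp hq hr hs npq npr nps nqr nqs nrs e1 e2 e3
    obtain ⟨y1, hy1, y4, hy4, hy14⟩ := Finset.one_lt_card.mp (by omega : 1 < Yg.card)
    have hy1Y := hYgY hy1
    have hy4Y := hYgY hy4
    exact stmt9_build H hfree y1 p q y4 r s
      (Ne.symm (neXY p hp y1 hy1Y)) (Ne.symm (neXY q hq y1 hy1Y)) hy14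
      (Ne.symm (neXY r hr y1 hy1Y)) (Ne.symm (neXY s hs y1 hy1Y))
      npq (neXY p hp y4 hy4Y) npr nps
      (neXY q hq y4 hy4Y) nqr nqs
      (Ne.symm (neXY r hr y4 hy4Y)) (Ne.symm (neXY s hs y4 hy4Y)) nrs
      (hYgood y1 hy1 p hp).symm (hYgood y1 hy1 q hq).symm e1
      (hYgood y4 hy4 p hp) (hYgood y4 hy4 q hq) e2
      (hYgood y4 hy4 r hr).symm (hYgood y4 hy4 s hs).symm e3
  have Yindep : ∀ y ∈ Y, ∀ y' ∈ Y, ¬ H.Adj y y' := by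
    intro y hy y' hy' hyy'
    have hne : y ≠ y' := hyy'.ne
    have key : ∀ p q r u w : V, p ∈ X → q ∈ X → r ∈ X → u ∈ Y → w ∈ Y →
        p ≠ q → p ≠ r → q ≠ r → H.Adj p q → H.Adj p r → H.Adj q r →
        H.Adj u w → H.Adj p u → H.Adj p w → H.Adj q w → False := by
      intro p q r u w hpX hqX hrX huY hwY npq npr nqr apq apr aqr auw apu apw aqw
      have nuw : u ≠ w := auw.ne
      have hcard2 : 0 < (Yg \ {u, w}).card := by
        have h1 : Yg.card ≤ (Yg \ {u, w}).card + ({u, w} : Finset V).card :=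
          Finset.card_le_card_sdiff_add_card
        have h2 : ({u, w} : Finset V).card ≤ 2 := Finset.card_insert_le _ _ |>.trans (by simp)
        omega
      obtain ⟨z, hz⟩ := Finset.card_pos.mp hcard2
      have hzYg : z ∈ Yg := (Finset.mem_sdiff.mp hz).1
      have hzY : z ∈ Y := hYgY hzYg
      have hznu : z ≠ u := by
        intro hzu
        exact (Finset.mem_sdiff.mp hz).2 (by simp [hzu])
      have hznw : z ≠ w := by
        intro hzw
        exact (Finset.mem_sdiff.mp hz).2 (by simp [hzw])
      exact stmt9_build H hfree u w p q r z
        nuw (Ne.symm (neXY p hpX u huY)) (Ne.symm (neXY q hqX u huY))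
        (Ne.symm (neXY r hrX u huY)) (Ne.symm hznu)
        (Ne.symm (neXY p hpX w hwY)) (Ne.symm (neXY q hqX w hwY))
        (Ne.symm (neXY r hrX w hwY)) (Ne.symm hznw)
        npq npr (neXY p hpX z hzY) nqr (neXY q hqX z hzY) (neXY r hrX z hzY)
        auw apu.symm apw.symm aqw.symm apq apr aqr
        (hYgood z hzYg q hqX) (hYgood z hzYg r hrX)
    have key2 : ∀ p q r : V, p ∈ X → q ∈ X → r ∈ X → H.Adj p q → H.Adj p r → H.Adj q r →
        (p, y) ∉ Mf → (p, y') ∉ Mf → False := by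
      intro p q r hpX hqX hrX apq apr aqr hpy hpy'
      have npq : p ≠ q := apq.ne
      have npr : p ≠ r := apr.ne
      have nqr : q ≠ r := aqr.ne
      have hpyA : H.Adj p y := hadjM p hpX y hy hpy
      have hpy'A : H.Adj p y' := hadjM p hpX y' hy' hpy'
      by_cases h1 : (q, y') ∈ Mf
      · by_cases h2 : (q, y) ∈ Mf
        · have h3 : (r, y') ∉ Mf := by
            intro h
            exact not3 (q, y) (q, y') (r, y') h2 h1 h
              (by simp [hne]) (by intro hh; exact nqr (congrArg Prod.fst hh))
              (by intro hh; exact nqr (congrArg Prod.fst hh))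
          exact key p r q y y' hpX hrX hqX hy hy' npr npq (Ne.symm nqr)
            apr apq aqr.symm hyy' hpyA hpy'A (hadjM r hrX y' hy' h3)
        · exact key p q r y' y hpX hqX hrX hy' hy npq npr nqr apq apr aqr
            hyy'.symm hpy'A hpyA (hadjM q hqX y hy h2)
      · exact key p q r y y' hpX hqX hrX hy hy' npq npr nqr apq apr aqr
          hyy' hpyA hpy'A (hadjM q hqX y' hy' h1)
    by_cases hA : (a, y) ∉ Mf ∧ (a, y') ∉ Mf
    · exact key2 a b c haX hbX hcX hab hac hbc hA.1 hA.2
    · by_cases hB : (b, y) ∉ Mf ∧ (b, y') ∉ Mf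
      · exact key2 b a c hbX haX hcX hab.symm hbc hac hB.1 hB.2
      · by_cases hC : (c, y) ∉ Mf ∧ (c, y') ∉ Mf
        · exact key2 c a b hcX haX hbX hac.symm hbc.symm hab hC.1 hC.2
        · have hget : ∀ x : V, ¬ ((x, y) ∉ Mf ∧ (x, y') ∉ Mf) → ∃ z, (x, z) ∈ Mf := by
            intro x hx
            by_cases h : (x, y) ∈ Mf
            · exact ⟨y, h⟩
            · exact ⟨y', by tauto⟩
          obtain ⟨za, hza⟩ := hget a hA
          obtain ⟨zb, hzb⟩ := hget b hB
          obtain ⟨zc, hzc⟩ := hget c hC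
          exact not3 (a, za) (b, zb) (c, zc) hza hzb hzc
            (by intro hh; exact hab.ne (congrArg Prod.fst hh))
            (by intro hh; exact hac.ne (congrArg Prod.fst hh))
            (by intro hh; exact hbc.ne (congrArg Prod.fst hh))
  -- counting part
  have htriC : triCount H = (H.cliqueFinset 3).card := rfl
  set T := H.cliqueFinset 3 with hT
  set T1 := T.filter (fun t => t ⊆ X) with hT1
  set T2 := T.filter (fun t => ¬ t ⊆ X) with hT2
  have hsplit : T1.card + T2.card = T.card :=
    Finset.card_filter_add_card_filter_not _
  have hmemT : ∀ t ∈ T, t.card = 3 ∧ ∀ x ∈ t, ∀ z ∈ t, x ≠ z → H.Adj x z := by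
    intro t ht
    rw [hT, SimpleGraph.mem_cliqueFinset_iff] at ht
    exact ⟨ht.2, fun x hx z hz hxz => ht.1 (Finset.mem_coe.mpr hx) (Finset.mem_coe.mpr hz) hxz⟩
  -- T1 bound
  have hT1disj : ∀ t1 ∈ T1, ∀ t2 ∈ T1, t1 ≠ t2 → Disjoint (id t1) (id t2) := by
    intro t1 ht1 t2 ht2 hne12
    rw [Finset.disjoint_left]
    intro x hx1 hx2
    obtain ⟨ht1T, ht1X⟩ := Finset.mem_filter.mp ht1
    obtain ⟨ht2T, ht2X⟩ := Finset.mem_filter.mp ht2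
    obtain ⟨hc1, hq1⟩ := hmemT t1 ht1T
    obtain ⟨hc2, hq2⟩ := hmemT t2 ht2T
    simp only [id] at hx1 hx2
    have hce : (t1.erase x).card = 2 := by rw [Finset.card_erase_of_mem hx1, hc1]
    obtain ⟨b1, c1, hbc1, hbe⟩ := Finset.card_eq_two.mp hce
    have hb1 : b1 ∈ t1.erase x := by rw [hbe]; simp
    have hc1' : c1 ∈ t1.erase x := by rw [hbe]; simp
    obtain ⟨hb1x, hb1t⟩ := Finset.mem_erase.mp hb1
    obtain ⟨hc1x, hc1t⟩ := Finset.mem_erase.mp hc1'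
    obtain ⟨d, hd2, hd1⟩ : ∃ d ∈ t2, d ∉ t1 := by
      by_contra hcon
      push_neg at hcon
      exact hne12 (Finset.eq_of_subset_of_card_le hcon (by omega)).symm
    exact noP4 d x b1 c1 (ht2X hd2) (ht1X hx1) (ht1X hb1t) (ht1X hc1t)
      (by intro hh; exact hd1 (by rw [hh]; exact hx1))
      (by intro hh; exact hd1 (by rw [hh]; exact hb1t))
      (by intro hh; exact hd1 (by rw [hh]; exact hc1t))
      (Ne.symm hb1x) (Ne.symm hc1x) hbc1
      (hq2 d hd2 x hx2 (by intro hh; exact hd1 (by rw [hh]; exact hx1)))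
      (hq1 x hx1 b1 hb1t (Ne.symm hb1x)) (hq1 b1 hb1t c1 hc1t hbc1)
  have hT1le : T1.card ≤ X.card / 3 := by
    rw [Nat.le_div_iff_mul_le (by norm_num : 0 < 3)]
    have hbi : (T1.biUnion id).card = ∑ t ∈ T1, (id t).card := Finset.card_biUnion hT1disj
    have hsum : ∑ t ∈ T1, (id t).card = T1.card * 3 := by
      have hone : ∀ t ∈ T1, (id t).card = 3 :=
        fun t ht => (hmemT t (Finset.mem_filter.mp ht).1).1
      rw [Finset.sum_congr rfl hone]
      simp [mul_comm]
    have hsubX : T1.biUnion id ⊆ X := by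
      intro z hz
      obtain ⟨t, ht, hzt⟩ := Finset.mem_biUnion.mp hz
      exact (Finset.mem_filter.mp ht).2 hzt
    have := Finset.card_le_card hsubX
    omega
  -- T2 bound
  set EX := (X.powersetCard 2).filter (fun e => ∃ u ∈ e, ∃ v ∈ e, H.Adj u v) with hEX
  have hEXle : EX.card ≤ X.card := stmt9_ec_le H X noP4 X Finset.Subset.rfl
  have hcovmem : ∀ z : V, z ∈ X ∨ z ∈ Y := by
    intro z
    have : z ∈ X ∪ Y := hcover ▸ Finset.mem_univ z
    exact Finset.mem_union.mp this
  have hstruct : ∀ t ∈ T2, ∃ y0, y0 ∈ Y ∧ t ∩ Y = {y0} ∧ (t ∩ X).card = 2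
      ∧ t = (t ∩ X) ∪ {y0} := by
    intro t ht
    obtain ⟨htT, htX⟩ := Finset.mem_filter.mp ht
    obtain ⟨hc3, hq⟩ := hmemT t htT
    obtain ⟨y0, hy0t, hy0X⟩ : ∃ z ∈ t, z ∉ X := by
      by_contra hcon
      push_neg at hcon
      exact htX hcon
    have hy0Y : y0 ∈ Y := (hcovmem y0).resolve_left hy0X
    have hsingle : t ∩ Y = {y0} := by
      apply Finset.eq_singleton_iff_unique_mem.mpr
      refine ⟨Finset.mem_inter.mpr ⟨hy0t, hy0Y⟩, ?_⟩
      intro z hz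
      obtain ⟨hzt, hzY⟩ := Finset.mem_inter.mp hz
      by_contra hzne
      exact Yindep z hzY y0 hy0Y (hq z hzt y0 hy0t hzne)
    have hun : (t ∩ X) ∪ (t ∩ Y) = t := by
      ext z
      simp only [Finset.mem_union, Finset.mem_inter]
      constructor
      · rintro (⟨h, _⟩ | ⟨h, _⟩) <;> exact h
      · intro hzt
        rcases hcovmem z with h | h
        · exact Or.inl ⟨hzt, h⟩
        · exact Or.inr ⟨hzt, h⟩
    have hdisj' : Disjoint (t ∩ X) (t ∩ Y) :=
      hdisj.mono Finset.inter_subset_right Finset.inter_subset_right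
    have hcu := Finset.card_union_of_disjoint hdisj'
    rw [hun, hsingle, Finset.card_singleton] at hcu
    have hcx : (t ∩ X).card = 2 := by omega
    exact ⟨y0, hy0Y, hsingle, hcx, by rw [← hsingle]; exact hun.symm⟩
  have hchoose : ∀ (t : Finset V) (y0 : V), t ∩ Y = {y0} →
      (if h : (t ∩ Y).Nonempty then Exists.choose h else a) = y0 := by
    intro t y0 hsingle
    have hne' : (t ∩ Y).Nonempty := ⟨y0, by rw [hsingle]; simp⟩
    rw [dif_pos hne']
    have hmem : Exists.choose hne' ∈ ({y0} : Finset V) := by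
      rw [← hsingle]; exact Exists.choose_spec hne'
    simpa using hmem
  have hT2le : T2.card ≤ EX.card * Y.card := by
    rw [← Finset.card_product]
    apply Finset.card_le_card_of_injOn
      (fun t => (t ∩ X, if h : (t ∩ Y).Nonempty then Exists.choose h else a))
    · intro t ht
      obtain ⟨y0, hy0Y, hsingle, hcx, hteq⟩ := hstruct t ht
      obtain ⟨htT, htX⟩ := Finset.mem_filter.mp ht
      obtain ⟨hc3, hq⟩ := hmemT t htT
      refine Finset.mem_coe.mpr (Finset.mem_product.mpr ?_)
      constructor
      · rw [hEX, Finset.mem_filter, Finset.mem_powersetCard]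
        refine ⟨⟨Finset.inter_subset_right, hcx⟩, ?_⟩
        obtain ⟨x1, x2, hx12, hxe⟩ := Finset.card_eq_two.mp hcx
        have hx1 : x1 ∈ t ∩ X := by rw [hxe]; simp
        have hx2 : x2 ∈ t ∩ X := by rw [hxe]; simp
        exact ⟨x1, hx1, x2, hx2,
          hq x1 (Finset.mem_inter.mp hx1).1 x2 (Finset.mem_inter.mp hx2).1 hx12⟩
      · simp only [hchoose t y0 hsingle]
        exact hy0Y
    · intro t1 ht1 t2 ht2 heq
      obtain ⟨y1, hy1Y, hs1, hcx1, he1⟩ := hstruct t1 (Finset.mem_coe.mp ht1)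
      obtain ⟨y2, hy2Y, hs2, hcx2, he2⟩ := hstruct t2 (Finset.mem_coe.mp ht2)
      rw [Prod.mk.injEq, hchoose t1 y1 hs1, hchoose t2 y2 hs2] at heq
      rw [he1, he2, heq.1, heq.2]
  have hmul : EX.card * Y.card ≤ X.card * Y.card := Nat.mul_le_mul_right _ hEXle
  rw [htriC]
  omega
end

section
/- Let G be a P_6^2-free graph containing five distinct vertices u_1, u_2, u_3, u_4, u_5 such that every pair among them is adjacent except possibly the pair {u_4, u_5} (i.e., G contains a copy of K_5 minus one edge). Then there is no vertex v outside {u_1, u_2, u_3, u_4, u_5} such that v, u_2, u_4 are pairwise adjacent. -/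
open SimpleGraph

/-- In a `P_6^2`-free graph containing a copy of `K_5` minus the edge `u₄u₅`, no outside
vertex forms a triangle with `u₂` and `u₄`. -/
theorem stmt12 {V : Type*} (G : SimpleGraph V) (hfree : P6SqFree G)
    (u₁ u₂ u₃ u₄ u₅ : V) (hdist : List.Pairwise (· ≠ ·) [u₁, u₂, u₃, u₄, u₅])
    (h12 : G.Adj u₁ u₂) (h13 : G.Adj u₁ u₃) (h14 : G.Adj u₁ u₄) (h15 : G.Adj u₁ u₅)
    (h23 : G.Adj u₂ u₃) (h24 : G.Adj u₂ u₄) (h25 : G.Adj u₂ u₅)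
    (h34 : G.Adj u₃ u₄) (h35 : G.Adj u₃ u₅) :
    ¬ ∃ v : V, v ∉ ({u₁, u₂, u₃, u₄, u₅} : Set V) ∧ G.Adj v u₂ ∧ G.Adj v u₄ := by
  rintro ⟨v, hv, hv2, hv4⟩
  simp only [Set.mem_insert_iff, Set.mem_singleton_iff, not_or] at hv
  obtain ⟨nv1, nv2, nv3, nv4, nv5⟩ := hv
  simp only [List.pairwise_cons, List.mem_cons, List.mem_singleton,
    List.not_mem_nil, forall_eq_or_imp, forall_eq] at hdist
  obtain ⟨⟨n12, n13, n14, n15, -⟩, ⟨n23, n24, n25, -⟩, ⟨n34, n35, -⟩, ⟨n45, -⟩, -⟩ := hdist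
  apply hfree
  refine ⟨![v, u₄, u₂, u₁, u₃, u₅], ?_, ?_⟩
  · intro i j h
    fin_cases i <;> fin_cases j <;>
      first
        | rfl
        | (exact absurd h (by first
            | exact nv1 | exact nv2 | exact nv3 | exact nv4 | exact nv5
            | exact (nv1 ·.symm) | exact (nv2 ·.symm) | exact (nv3 ·.symm)
            | exact (nv4 ·.symm) | exact (nv5 ·.symm)
            | exact n12 | exact n13 | exact n14 | exact n15
            | exact n23 | exact n24 | exact n25 | exact n34 | exact n35 | exact n45
            | exact (n12 ·.symm) | exact (n13 ·.symm) | exact (n14 ·.symm)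
            | exact (n15 ·.symm) | exact (n23 ·.symm) | exact (n24 ·.symm)
            | exact (n25 ·.symm) | exact (n34 ·.symm) | exact (n35 ·.symm)
            | exact (n45 ·.symm)))
  · intro i j h1 h2
    fin_cases i <;> fin_cases j <;>
      first
        | exact absurd h1 (by decide)
        | exact absurd h2 (by decide)
        | exact hv4 | exact hv2 | exact h24.symm | exact h14.symm | exact h12.symm
        | exact h23.symm | exact h13 | exact h15 | exact h35 | exact h23
end

section
/- Let G be a P_6^2-free graph containing five distinct vertices u_1, u_2, u_3, u_4, u_5 such that every pair among them is adjacent except possibly the pair {u_4, u_5}. Suppose w is a vertex outside {u_1, u_2, u_3, u_4, u_5} such that w, u_1, u_3 are pairwise adjacent. Then there is no vertex v outside {u_1, u_2, u_3, u_4, u_5, w} such that v, u_3, w are pairwise adjacent. -/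
open SimpleGraph

/-- In a `P_6^2`-free graph containing a copy of `K_5` minus the edge `u₄u₅`, if an
outside vertex `w` forms a triangle with `u₁` and `u₃`, then no further vertex forms a
triangle with `u₃` and `w`. -/
theorem stmt13 {V : Type*} (G : SimpleGraph V) (hfree : P6SqFree G)
    (u₁ u₂ u₃ u₄ u₅ : V) (hdist : List.Pairwise (· ≠ ·) [u₁, u₂, u₃, u₄, u₅])
    (h12 : G.Adj u₁ u₂) (h13 : G.Adj u₁ u₃) (h14 : G.Adj u₁ u₄) (h15 : G.Adj u₁ u₅)
    (h23 : G.Adj u₂ u₃) (h24 : G.Adj u₂ u₄) (h25 : G.Adj u₂ u₅)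
    (h34 : G.Adj u₃ u₄) (h35 : G.Adj u₃ u₅)
    (w : V) (hw : w ∉ ({u₁, u₂, u₃, u₄, u₅} : Set V))
    (hw1 : G.Adj w u₁) (hw3 : G.Adj w u₃) :
    ¬ ∃ v : V, v ∉ ({u₁, u₂, u₃, u₄, u₅, w} : Set V) ∧ G.Adj v u₃ ∧ G.Adj v w := by
  rintro ⟨v, hv, hv3, hvw⟩
  simp only [Set.mem_insert_iff, Set.mem_singleton_iff, not_or] at hv hw
  obtain ⟨n1, n2, n3, n4, n5, n6⟩ := hv
  obtain ⟨m1, m2, m3, m4, m5⟩ := hw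
  simp only [List.pairwise_cons, List.mem_cons, List.mem_singleton,
    List.not_mem_nil, or_false, false_or] at hdist
  obtain ⟨hd1, hd2, hd3, hd4, -⟩ := hdist
  have e12 : u₁ ≠ u₂ := hd1 u₂ (Or.inl rfl)
  have e13 : u₁ ≠ u₃ := hd1 u₃ (Or.inr (Or.inl rfl))
  have e14 : u₁ ≠ u₄ := hd1 u₄ (Or.inr (Or.inr (Or.inl rfl)))
  have e23 : u₂ ≠ u₃ := hd2 u₃ (Or.inl rfl)
  have e24 : u₂ ≠ u₄ := hd2 u₄ (Or.inr (Or.inl rfl))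
  have e34 : u₃ ≠ u₄ := hd3 u₄ (Or.inl rfl)
  apply hfree
  refine ⟨![v, w, u₃, u₁, u₂, u₄], ?_, ?_⟩
  · intro i j hij
    fin_cases i <;> fin_cases j <;>
      first
      | rfl
      | exact absurd hij n1 | exact absurd hij n2 | exact absurd hij n3
      | exact absurd hij n4 | exact absurd hij n6
      | exact absurd hij m1 | exact absurd hij m2 | exact absurd hij m3
      | exact absurd hij m4
      | exact absurd hij.symm n1 | exact absurd hij.symm n2
      | exact absurd hij.symm n3 | exact absurd hij.symm n4
      | exact absurd hij.symm n6 | exact absurd hij.symm m1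
      | exact absurd hij.symm m2 | exact absurd hij.symm m3
      | exact absurd hij.symm m4
      | exact absurd hij e12 | exact absurd hij e13 | exact absurd hij e14
      | exact absurd hij e23 | exact absurd hij e24 | exact absurd hij e34
      | exact absurd hij e12.symm | exact absurd hij e13.symm
      | exact absurd hij e14.symm | exact absurd hij e23.symm
      | exact absurd hij e24.symm | exact absurd hij e34.symm
  · intro i j h1 h2
    fin_cases i <;> fin_cases j <;>
      first
      | exact hvw | exact hv3 | exact hw3 | exact hw1 | exact h13.symm
      | exact h23.symm | exact h12 | exact h14 | exact h24
      | exact absurd h1 (by decide) | exact absurd h2 (by decide)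
end

section
/- Let G be a P_6^2-free graph containing six distinct vertices u_1, …, u_6 such that u_1, u_2, u_3 are pairwise adjacent, u_4 is adjacent to u_1 and u_2, u_5 is adjacent to u_1 and u_3, and u_6 is adjacent to u_2 and u_3 (so these six vertices contain a copy of the triangular pyramid TP_2 with central triangle u_1u_2u_3). Then the three vertices u_4, u_5, u_6 are pairwise non-adjacent in G. -/
open SimpleGraph

set_option maxRecDepth 4000 in
lemma p6sq_aux {V : Type*} (G : SimpleGraph V) (hfree : P6SqFree G)
    (a b c d e f : V)
    (hab : a ≠ b) (hac : a ≠ c) (had : a ≠ d) (hae : a ≠ e) (haf : a ≠ f)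
    (hbc : b ≠ c) (hbd : b ≠ d) (hbe : b ≠ e) (hbf : b ≠ f)
    (hcd : c ≠ d) (hce : c ≠ e) (hcf : c ≠ f)
    (hde : d ≠ e) (hdf : d ≠ f) (hef : e ≠ f)
    (e12 : G.Adj a b) (e13 : G.Adj a c) (e23 : G.Adj b c)
    (e24 : G.Adj b d) (e34 : G.Adj c d) (e35 : G.Adj c e)
    (e45 : G.Adj d e) (e46 : G.Adj d f) (e56 : G.Adj e f) : False := by
  apply hfree
  have h5 : (![a, b, c, d, e, f] : Fin 6 → V) 5 = f := rfl
  refine ⟨![a, b, c, d, e, f], ?_, ?_⟩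
  · intro i j hij
    fin_cases i <;> fin_cases j <;>
      simp_all [h5]
  · intro i j h1 h2
    fin_cases i <;> fin_cases j <;>
      simp_all [h5]

/-- In a `P_6^2`-free graph containing a copy of `TP_2` with central triangle `u₁u₂u₃`
and outer vertices `u₄, u₅, u₆`, the outer vertices are pairwise non-adjacent. -/
theorem stmt16 {V : Type*} (G : SimpleGraph V) (hfree : P6SqFree G)
    (u₁ u₂ u₃ u₄ u₅ u₆ : V) (hdist : List.Pairwise (· ≠ ·) [u₁, u₂, u₃, u₄, u₅, u₆])
    (h12 : G.Adj u₁ u₂) (h13 : G.Adj u₁ u₃) (h23 : G.Adj u₂ u₃)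
    (h41 : G.Adj u₄ u₁) (h42 : G.Adj u₄ u₂)
    (h51 : G.Adj u₅ u₁) (h53 : G.Adj u₅ u₃)
    (h62 : G.Adj u₆ u₂) (h63 : G.Adj u₆ u₃) :
    ¬ G.Adj u₄ u₅ ∧ ¬ G.Adj u₄ u₆ ∧ ¬ G.Adj u₅ u₆ := by
  simp only [List.pairwise_cons, List.mem_cons, List.not_mem_nil, List.mem_singleton,
    or_false, forall_eq_or_imp, forall_eq] at hdist
  obtain ⟨⟨n12, n13, n14, n15, n16⟩, ⟨n23, n24, n25, n26⟩, ⟨n34, n35, n36⟩, ⟨n45, n46⟩, n56, -⟩ := hdist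
  refine ⟨fun hadj => ?_, fun hadj => ?_, fun hadj => ?_⟩
  · exact p6sq_aux G hfree u₆ u₂ u₃ u₁ u₅ u₄
      n26.symm n36.symm n16.symm n56.symm n46.symm
      n23 n12.symm n25 n24
      n13.symm n35 n34
      n15 n14 n45.symm
      h62 h63 h23 h12.symm h13.symm h53.symm h51.symm h41.symm hadj.symm
  · exact p6sq_aux G hfree u₅ u₁ u₃ u₂ u₆ u₄
      n15.symm n35.symm n25.symm n56 n45.symm
      n13 n12 n16 n14
      n23.symm n36 n34
      n26 n24 n46.symm
      h51 h53 h13 h12 h23.symm h63.symm h62.symm h42.symm hadj.symm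
  · exact p6sq_aux G hfree u₄ u₂ u₁ u₃ u₅ u₆
      n24.symm n14.symm n34.symm n45 n46
      n12.symm n23 n25 n26
      n13 n15 n16
      n35 n36 n56
      h42 h41 h12.symm h23 h13 h51.symm h53.symm h63.symm hadj
end

section
/- Let G be a P_6^2-free graph containing six distinct vertices u_1, …, u_6 such that u_1, u_2, u_3 are pairwise adjacent, u_4 is adjacent to u_1 and u_2, u_5 is adjacent to u_1 and u_3, and u_6 is adjacent to u_2 and u_3. Then there is no vertex v outside {u_1, u_2, u_3, u_4, u_5, u_6} such that v, u_1, u_4 are pairwise adjacent. -/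
open SimpleGraph

/-- In a `P_6^2`-free graph containing a copy of `TP_2` with central triangle `u₁u₂u₃`
and outer vertices `u₄, u₅, u₆`, no outside vertex forms a triangle with `u₁` and `u₄`. -/
theorem stmt17 {V : Type*} (G : SimpleGraph V) (hfree : P6SqFree G)
    (u₁ u₂ u₃ u₄ u₅ u₆ : V) (hdist : List.Pairwise (· ≠ ·) [u₁, u₂, u₃, u₄, u₅, u₆])
    (h12 : G.Adj u₁ u₂) (h13 : G.Adj u₁ u₃) (h23 : G.Adj u₂ u₃)
    (h41 : G.Adj u₄ u₁) (h42 : G.Adj u₄ u₂)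
    (h51 : G.Adj u₅ u₁) (h53 : G.Adj u₅ u₃)
    (h62 : G.Adj u₆ u₂) (h63 : G.Adj u₆ u₃) :
    ¬ ∃ v : V, v ∉ ({u₁, u₂, u₃, u₄, u₅, u₆} : Set V) ∧ G.Adj v u₁ ∧ G.Adj v u₄ := by
  rintro ⟨v, hv, hv1, hv4⟩
  simp only [Set.mem_insert_iff, Set.mem_singleton_iff, not_or] at hv
  obtain ⟨n1, n2, n3, n4, n5, n6⟩ := hv
  simp only [List.pairwise_cons, List.mem_cons, List.not_mem_nil, List.mem_singleton] at hdist
  obtain ⟨hd1, hd2, hd3, hd4, -⟩ := hdist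
  have d12 := hd1 u₂ (by tauto); have d13 := hd1 u₃ (by tauto)
  have d14 := hd1 u₄ (by tauto); have d16 := hd1 u₆ (by tauto)
  have d23 := hd2 u₃ (by tauto); have d24 := hd2 u₄ (by tauto)
  have d26 := hd2 u₆ (by tauto); have d34 := hd3 u₄ (by tauto)
  have d36 := hd3 u₆ (by tauto); have d46 := hd4 u₆ (by tauto)
  apply hfree
  refine ⟨([v, u₄, u₁, u₂, u₃, u₆] : List V).get, ?_, ?_⟩
  · apply List.nodup_iff_injective_get.mp
    simp [List.nodup_cons, n1, n2, n3, n4, n5, n6, d12, d13, d16, d23, d26, d36, d46,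
      d14.symm, d24.symm, d34.symm]
  · intro i j h1 h2
    fin_cases i <;> fin_cases j <;> simp only [List.get] <;>
      first
        | exact hv4
        | exact hv1
        | exact h41
        | exact h42
        | exact h12
        | exact h13
        | exact h23
        | exact h62.symm
        | exact h63.symm
        | simp at h1 h2
end
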